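/- arXiv:1911.13003 — 4 statements merged into one kernel-verified Lean document; each statement's English description precedes it below -/
import Mathlib

section
/- Suppose A ∈ ℝ^{2N×2N} is a constant matrix satisfying A + Aᵀ ≥ α·Id for some α > 0. For 1 ≤ i ≤ N, let D_i ∈ ℝ^{2N×2N} be the matrix whose i-th and (N+i)-th columns coincide with those of −(Id + A K)^{-1}(Id − A K) P₂ and whose other columns are zero. Then there exists β < 0 such that the complex matrix Id − Σ_{i=1}^N D_i e^{−λ τ_i} is invertible for every λ ∈ ℂ with Re(λ) > β. -/
open MeasureTheory Matrix Filter Set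
open scoped ENNReal

section AuxTel
variable {ι : Type*} [Fintype ι] [DecidableEq ι]

private lemma telAux_cs (B : Matrix ι ι ℝ) (x : ι → ℝ) :
    ∑ r, ((B *ᵥ x) r) ^ 2 ≤ (∑ r, ∑ c, (B r c) ^ 2) * ∑ c, (x c) ^ 2 := by
  rw [Finset.sum_mul]
  refine Finset.sum_le_sum fun r _ => ?_
  simpa [Matrix.mulVec, dotProduct] using
    Finset.sum_mul_sq_le_sq_mul_sq Finset.univ (fun c => B r c) x

private lemma telAux_core [Nonempty ι]
    (κ : ι → ℝ) (hκ : ∀ s, 0 < κ s)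
    (A : Matrix ι ι ℝ) (α : ℝ) (hα : 0 < α)
    (hdiss : ∀ y : ι → ℝ, α * ∑ s, (y s) ^ 2 ≤ 2 * (y ⬝ᵥ (A *ᵥ y))) :
    ∃ c : ℝ, 0 < c ∧ c < 1 ∧ IsUnit (1 + A * Matrix.diagonal κ).det ∧
      ∀ x : ι → ℝ,
        ∑ s, κ s * (((1 - A * Matrix.diagonal κ) *ᵥ x) s) ^ 2
          ≤ c * ∑ s, κ s * (((1 + A * Matrix.diagonal κ) *ᵥ x) s) ^ 2 := by
  set Kd := Matrix.diagonal κ with hKdDef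
  have hKd : ∀ x : ι → ℝ, Kd *ᵥ x = fun t => κ t * x t := by
    intro x; funext t; exact Matrix.mulVec_diagonal κ x t
  have hBv : ∀ x : ι → ℝ, ∀ s, ((1 + A * Kd) *ᵥ x) s
      = x s + (A *ᵥ fun t => κ t * x t) s := by
    intro x s
    rw [Matrix.add_mulVec, Matrix.one_mulVec, ← Matrix.mulVec_mulVec, hKd]
    rfl
  have hB'v : ∀ x : ι → ℝ, ∀ s, ((1 - A * Kd) *ᵥ x) s
      = x s - (A *ᵥ fun t => κ t * x t) s := by
    intro x s
    rw [Matrix.sub_mulVec, Matrix.one_mulVec, ← Matrix.mulVec_mulVec, hKd]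
    rfl
  have hid : ∀ x : ι → ℝ,
      ∑ s, κ s * (((1 - A * Kd) *ᵥ x) s) ^ 2
        = (∑ s, κ s * (((1 + A * Kd) *ᵥ x) s) ^ 2)
          - 4 * ((fun t => κ t * x t) ⬝ᵥ (A *ᵥ fun t => κ t * x t)) := by
    intro x
    calc ∑ s, κ s * (((1 - A * Kd) *ᵥ x) s) ^ 2
        = ∑ s, (κ s * (((1 + A * Kd) *ᵥ x) s) ^ 2
            - 4 * ((κ s * x s) * (A *ᵥ fun t => κ t * x t) s)) := by
          refine Finset.sum_congr rfl fun s _ => ?_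
          rw [hBv x s, hB'v x s]; ring
      _ = _ := by
          rw [Finset.sum_sub_distrib, dotProduct, Finset.mul_sum]
  have hne : (Finset.univ : Finset ι).Nonempty := Finset.univ_nonempty
  set m := Finset.univ.inf' hne κ with hmDef
  have hmpos : 0 < m := (Finset.lt_inf'_iff hne).2 fun s _ => hκ s
  have hmle : ∀ s, m ≤ κ s := fun s => Finset.inf'_le κ (Finset.mem_univ s)
  set Mk := Finset.univ.sup' hne κ with hMkDef
  have hMk : ∀ s, κ s ≤ Mk := fun s => Finset.le_sup' κ (Finset.mem_univ s)
  have hMkpos : 0 < Mk := lt_of_lt_of_le (hκ (Classical.arbitrary ι)) (hMk _)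
  set S := ∑ r, ∑ c, (((1 + A * Kd) : Matrix ι ι ℝ) r c) ^ 2 with hSDef
  have hS : 0 ≤ S := Finset.sum_nonneg fun r _ => Finset.sum_nonneg fun c _ => sq_nonneg _
  set T := Mk * (S + 1) with hTDef
  have hT : 0 < T := mul_pos hMkpos (by linarith)
  set ε := 2 * α * m ^ 2 / T with hεDef
  have hεpos : 0 < ε := div_pos (by positivity) hT
  set c := max (1 - ε) (1 / 2) with hcDef
  have hc0 : 0 < c := lt_of_lt_of_le one_half_pos (le_max_right _ _)
  have hc1 : c < 1 := max_lt (by linarith) (by norm_num)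
  have hcε : 1 - ε ≤ c := le_max_left _ _
  have hmain : ∀ x : ι → ℝ,
      ∑ s, κ s * (((1 - A * Kd) *ᵥ x) s) ^ 2
        ≤ c * ∑ s, κ s * (((1 + A * Kd) *ᵥ x) s) ^ 2 := by
    intro x
    set y : ι → ℝ := fun t => κ t * x t with hyDef
    have hy2 : α * ∑ s, (y s) ^ 2 ≤ 2 * (y ⬝ᵥ (A *ᵥ y)) := hdiss y
    have hyx : m ^ 2 * ∑ s, (x s) ^ 2 ≤ ∑ s, (y s) ^ 2 := by
      rw [Finset.mul_sum]
      refine Finset.sum_le_sum fun s _ => ?_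
      have h1 : m ^ 2 ≤ κ s ^ 2 := by nlinarith [hmle s, hmpos]
      calc m ^ 2 * x s ^ 2 ≤ κ s ^ 2 * x s ^ 2 :=
            mul_le_mul_of_nonneg_right h1 (sq_nonneg _)
        _ = (y s) ^ 2 := by rw [hyDef]; ring
    have hx2 : 0 ≤ ∑ s, (x s) ^ 2 := Finset.sum_nonneg fun s _ => sq_nonneg _
    have hSu0 : 0 ≤ ∑ s, κ s * (((1 + A * Kd) *ᵥ x) s) ^ 2 :=
      Finset.sum_nonneg fun s _ => mul_nonneg (hκ s).le (sq_nonneg _)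
    have hupper : ∑ s, κ s * (((1 + A * Kd) *ᵥ x) s) ^ 2 ≤ T * ∑ s, (x s) ^ 2 := by
      have h1 : ∑ s, κ s * (((1 + A * Kd) *ᵥ x) s) ^ 2
          ≤ Mk * ∑ s, (((1 + A * Kd) *ᵥ x) s) ^ 2 := by
        rw [Finset.mul_sum]
        exact Finset.sum_le_sum fun s _ => mul_le_mul_of_nonneg_right (hMk s) (sq_nonneg _)
      have h2 := telAux_cs (1 + A * Kd) x
      nlinarith [h1, h2, hMkpos, hx2, hS]
    have h5 : ε * (∑ s, κ s * (((1 + A * Kd) *ᵥ x) s) ^ 2)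
        ≤ 4 * (y ⬝ᵥ (A *ᵥ y)) := by
      have hεT : ε * T = 2 * α * m ^ 2 := div_mul_cancel₀ _ (ne_of_gt hT)
      nlinarith [mul_le_mul_of_nonneg_left hupper hεpos.le, hy2, hyx, hα]
    have hid' := hid x
    nlinarith [hSu0, mul_nonneg (sub_nonneg.2 hcε) hSu0]
  have hBdet : IsUnit (1 + A * Kd).det := by
    rw [isUnit_iff_ne_zero]
    intro h0
    obtain ⟨v, hv0, hv⟩ := Matrix.exists_mulVec_eq_zero_iff.2 h0
    have hid' := hid v
    rw [hv] at hid'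
    simp only [Pi.zero_apply, ne_eq, OfNat.ofNat_ne_zero, not_false_eq_true, zero_pow,
      mul_zero, Finset.sum_const_zero, zero_sub] at hid'
    have h2 := hdiss fun t => κ t * v t
    have hyx : m ^ 2 * ∑ s, (v s) ^ 2 ≤ ∑ s, (κ s * v s) ^ 2 := by
      rw [Finset.mul_sum]
      refine Finset.sum_le_sum fun s _ => ?_
      have h1 : m ^ 2 ≤ κ s ^ 2 := by nlinarith [hmle s, hmpos]
      calc m ^ 2 * v s ^ 2 ≤ κ s ^ 2 * v s ^ 2 :=
            mul_le_mul_of_nonneg_right h1 (sq_nonneg _)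
        _ = (κ s * v s) ^ 2 := by ring
    have hSw0 : 0 ≤ ∑ s, κ s * (((1 - A * Kd) *ᵥ v) s) ^ 2 :=
      Finset.sum_nonneg fun s _ => mul_nonneg (hκ s).le (sq_nonneg _)
    have hq : (fun t => κ t * v t) ⬝ᵥ A *ᵥ (fun t => κ t * v t) ≤ 0 := by linarith
    have hy0 : ∑ s, (κ s * v s) ^ 2 ≤ 0 := by
      have h3 : α * ∑ s, (κ s * v s) ^ 2 ≤ α * 0 := by linarith
      exact (mul_le_mul_iff_right₀ hα).1 h3
    have hv2 : ∑ s, (v s) ^ 2 ≤ 0 := by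
      have h4 : m ^ 2 * ∑ s, (v s) ^ 2 ≤ m ^ 2 * 0 := by linarith
      exact (mul_le_mul_iff_right₀ (by positivity)).1 h4
    have hz : ∑ s, (v s) ^ 2 = 0 :=
      le_antisymm hv2 (Finset.sum_nonneg fun s _ => sq_nonneg _)
    refine hv0 (funext fun s => ?_)
    have := (Finset.sum_eq_zero_iff_of_nonneg fun s _ => sq_nonneg (v s)).1 hz s
      (Finset.mem_univ s)
    exact pow_eq_zero_iff (by norm_num) |>.1 this
  exact ⟨c, hc0, hc1, hBdet, hmain⟩

private lemma telAux_map_mulVec (X : Matrix ι ι ℝ) (w : ι → ℂ) (s : ι) :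
    ((X.map (fun r : ℝ => (r : ℂ))) *ᵥ w) s
      = ((X *ᵥ fun c => (w c).re) s : ℝ) + ((X *ᵥ fun c => (w c).im) s : ℝ) * Complex.I := by
  simp only [Matrix.mulVec, dotProduct, Matrix.map_apply]
  apply Complex.ext <;>
    simp [Complex.re_sum, Complex.im_sum, Complex.mul_re, Complex.mul_im]

private lemma telAux_complex (κ : ι → ℝ) (X : Matrix ι ι ℝ) (c : ℝ)
    (h : ∀ x : ι → ℝ, ∑ s, κ s * ((X *ᵥ x) s) ^ 2 ≤ c * ∑ s, κ s * (x s) ^ 2) :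
    ∀ w : ι → ℂ, ∑ s, κ s * Complex.normSq (((X.map fun r : ℝ => (r : ℂ)) *ᵥ w) s)
      ≤ c * ∑ s, κ s * Complex.normSq (w s) := by
  intro w
  have h1 : ∀ s, Complex.normSq (((X.map fun r : ℝ => (r : ℂ)) *ᵥ w) s)
      = ((X *ᵥ fun t => (w t).re) s) ^ 2 + ((X *ᵥ fun t => (w t).im) s) ^ 2 := by
    intro s; rw [telAux_map_mulVec]; exact Complex.normSq_add_mul_I _ _
  calc ∑ s, κ s * Complex.normSq (((X.map fun r : ℝ => (r : ℂ)) *ᵥ w) s)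
      = (∑ s, κ s * ((X *ᵥ fun t => (w t).re) s) ^ 2)
        + ∑ s, κ s * ((X *ᵥ fun t => (w t).im) s) ^ 2 := by
        rw [← Finset.sum_add_distrib]
        exact Finset.sum_congr rfl fun s _ => by rw [h1 s]; ring
    _ ≤ c * (∑ s, κ s * ((w s).re) ^ 2) + c * ∑ s, κ s * ((w s).im) ^ 2 :=
        add_le_add (h _) (h _)
    _ = c * ∑ s, κ s * Complex.normSq (w s) := by
        rw [← mul_add, ← Finset.sum_add_distrib]
        refine congrArg _ (Finset.sum_congr rfl fun s _ => ?_)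
        rw [Complex.normSq_apply]; ring

end AuxTel

/-- The matrix `−(Id + A K)⁻¹ (Id − A K) P₂`, where `K = diag(K₁,…,K_N,K₁,…,K_N)` and
`P₂ = ((0,Id),(Id,0))`. -/
noncomputable def telCouplingMatrix (N : ℕ) (A : Matrix (Fin N ⊕ Fin N) (Fin N ⊕ Fin N) ℝ)
    (K : Fin N → ℝ) : Matrix (Fin N ⊕ Fin N) (Fin N ⊕ Fin N) ℝ :=
  -(((1 : Matrix (Fin N ⊕ Fin N) (Fin N ⊕ Fin N) ℝ) + A * Matrix.diagonal (Sum.elim K K))⁻¹ *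
      ((1 : Matrix (Fin N ⊕ Fin N) (Fin N ⊕ Fin N) ℝ) - A * Matrix.diagonal (Sum.elim K K)) *
      Matrix.fromBlocks 0 1 1 0)

/-- Let `A` be a constant `2N×2N` matrix with `A + Aᵀ ≥ α·Id`, `α > 0`,
and let `D i` be the matrix whose `i`-th and `(N+i)`-th columns coincide with those of
`−(Id + A K)⁻¹ (Id − A K) P₂`, the other columns being zero. Then there is `β < 0` such
that `Id − ∑ i, D i * exp (−λ τ i)` is invertible for every `λ ∈ ℂ` with `Re λ > β`. -/
theorem constant_dissipative_delay_spectrum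
    (N : ℕ) (hN : 1 ≤ N)
    (τ : Fin N → ℝ) (hτpos : ∀ k, 0 < τ k) (hτmono : Monotone τ)
    (K : Fin N → ℝ) (hK : ∀ k, 0 < K k)
    (A : Matrix (Fin N ⊕ Fin N) (Fin N ⊕ Fin N) ℝ)
    (α : ℝ) (hα : 0 < α)
    (hdiss : (A + Aᵀ - α • (1 : Matrix (Fin N ⊕ Fin N) (Fin N ⊕ Fin N) ℝ)).PosSemidef)
    (D : Fin N → Matrix (Fin N ⊕ Fin N) (Fin N ⊕ Fin N) ℝ)
    (hD : ∀ i : Fin N, D i = Matrix.of fun r c =>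
      if c = Sum.inl i ∨ c = Sum.inr i then telCouplingMatrix N A K r c else 0) :
    ∃ β < (0 : ℝ), ∀ lam : ℂ, β < lam.re →
      IsUnit ((1 : Matrix (Fin N ⊕ Fin N) (Fin N ⊕ Fin N) ℂ) -
        ∑ i, Complex.exp (-lam * (τ i : ℂ)) • (D i).map (fun r => (r : ℂ))) := by
  classical
  haveI : Nonempty (Fin N) := ⟨⟨0, hN⟩⟩
  set κ : Fin N ⊕ Fin N → ℝ := Sum.elim K K with hκDef
  have hκ : ∀ s, 0 < κ s := by rintro (i | i) <;> exact hK i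
  -- dissipativity in quadratic-form shape
  have hdiss' : ∀ y : Fin N ⊕ Fin N → ℝ, α * ∑ s, (y s) ^ 2 ≤ 2 * (y ⬝ᵥ (A *ᵥ y)) := by
    intro y
    have h0 := hdiss.dotProduct_mulVec_nonneg y
    have hsy : star y = y := by funext s; simp
    rw [hsy] at h0
    have hAt : y ⬝ᵥ (Aᵀ *ᵥ y) = y ⬝ᵥ (A *ᵥ y) := by
      rw [Matrix.dotProduct_mulVec, Matrix.vecMul_transpose, dotProduct_comm]
    have hsm : (α • (1 : Matrix (Fin N ⊕ Fin N) (Fin N ⊕ Fin N) ℝ)) *ᵥ y = α • y := by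
      rw [Matrix.smul_mulVec, Matrix.one_mulVec]
    rw [Matrix.sub_mulVec, Matrix.add_mulVec, hsm, dotProduct_sub,
      dotProduct_add, dotProduct_smul, hAt] at h0
    have hyy : y ⬝ᵥ y = ∑ s, (y s) ^ 2 := by simp [dotProduct, sq]
    rw [hyy, smul_eq_mul] at h0
    linarith
  obtain ⟨c, hc0, hc1, hBdet, hcontr⟩ := telAux_core κ hκ A α hα hdiss'
  set B : Matrix (Fin N ⊕ Fin N) (Fin N ⊕ Fin N) ℝ := 1 + A * Matrix.diagonal κ with hB
  set B' : Matrix (Fin N ⊕ Fin N) (Fin N ⊕ Fin N) ℝ := 1 - A * Matrix.diagonal κ with hB'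
  set P : Matrix (Fin N ⊕ Fin N) (Fin N ⊕ Fin N) ℝ := Matrix.fromBlocks 0 1 1 0 with hP
  have hBB' : B' * B = B * B' := by rw [hB, hB']; noncomm_ring
  have hBinv : B⁻¹ * B = 1 := Matrix.nonsing_inv_mul B hBdet
  have hBinv' : B * B⁻¹ = 1 := Matrix.mul_nonsing_inv B hBdet
  have hM0 : B⁻¹ * B' = B' * B⁻¹ := by
    calc B⁻¹ * B' = B⁻¹ * B' * 1 := by rw [Matrix.mul_one]
      _ = B⁻¹ * B' * (B * B⁻¹) := by rw [hBinv']
      _ = B⁻¹ * (B' * B) * B⁻¹ := by simp only [Matrix.mul_assoc]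
      _ = B⁻¹ * (B * B') * B⁻¹ := by rw [hBB']
      _ = (B⁻¹ * B) * (B' * B⁻¹) := by simp only [Matrix.mul_assoc]
      _ = B' * B⁻¹ := by rw [hBinv, Matrix.one_mul]
  -- real contraction for B⁻¹ * B'
  have hM1 : ∀ u : Fin N ⊕ Fin N → ℝ,
      ∑ s, κ s * (((B⁻¹ * B') *ᵥ u) s) ^ 2 ≤ c * ∑ s, κ s * (u s) ^ 2 := by
    intro u
    have h1 : (B⁻¹ * B') *ᵥ u = B' *ᵥ (B⁻¹ *ᵥ u) := by
      rw [hM0, ← Matrix.mulVec_mulVec]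
    have h2 : B *ᵥ (B⁻¹ *ᵥ u) = u := by
      rw [Matrix.mulVec_mulVec, hBinv', Matrix.one_mulVec]
    have h3 := hcontr (B⁻¹ *ᵥ u)
    rw [h2] at h3
    rw [h1]
    exact h3
  have hM1C := telAux_complex κ (B⁻¹ * B') c hM1
  -- the swap structure of P
  have hPswap : ∀ w : Fin N ⊕ Fin N → ℂ,
      (P.map fun r : ℝ => (r : ℂ)) *ᵥ w
        = Sum.elim (fun i => w (Sum.inr i)) (fun i => w (Sum.inl i)) := by
    intro w
    have hmap : (P.map fun r : ℝ => (r : ℂ)) = Matrix.fromBlocks 0 1 1 0 := by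
      rw [hP, Matrix.fromBlocks_map,
        Matrix.map_zero _ Complex.ofReal_zero,
        Matrix.map_one _ Complex.ofReal_zero Complex.ofReal_one]
    rw [hmap]
    have hw : w = Sum.elim (fun i => w (Sum.inl i)) (fun i => w (Sum.inr i)) := by
      funext s; cases s <;> rfl
    conv_lhs => rw [hw]
    rw [Matrix.fromBlocks_mulVec]
    simp [Matrix.zero_mulVec, Matrix.one_mulVec]
  have hPhiswap : ∀ w : Fin N ⊕ Fin N → ℂ,
      ∑ s, κ s * Complex.normSq
          ((Sum.elim (fun i => w (Sum.inr i)) (fun i => w (Sum.inl i))) s)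
        = ∑ s, κ s * Complex.normSq (w s) := by
    intro w
    rw [Fintype.sum_sum_type, Fintype.sum_sum_type]
    simp only [Sum.elim_inl, Sum.elim_inr, hκDef]
    exact add_comm _ _
  -- choice of β
  set nmax : Fin N := ⟨N - 1, by omega⟩ with hnmax
  have hτmax : ∀ i, τ i ≤ τ nmax := fun i => hτmono (by
    have := i.isLt
    exact Fin.mk_le_mk.2 (by omega) |>.trans_eq rfl)
  have hτm : 0 < τ nmax := hτpos _
  set β := Real.log c / (4 * τ nmax) with hβ
  have hlogc : Real.log c < 0 := Real.log_neg hc0 hc1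
  have hβneg : β < 0 := div_neg_of_neg_of_pos hlogc (by positivity)
  refine ⟨β, hβneg, ?_⟩
  intro lam hlam
  by_contra hnot
  set M : Matrix (Fin N ⊕ Fin N) (Fin N ⊕ Fin N) ℝ := telCouplingMatrix N A K with hMdef
  have hM : M = -(B⁻¹ * B' * P) := rfl
  set e : Fin N ⊕ Fin N → ℂ :=
    Sum.elim (fun i => Complex.exp (-lam * (τ i : ℂ))) (fun i => Complex.exp (-lam * (τ i : ℂ)))
    with heDef
  have hmat : (1 : Matrix (Fin N ⊕ Fin N) (Fin N ⊕ Fin N) ℂ) -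
      ∑ i, Complex.exp (-lam * (τ i : ℂ)) • (D i).map (fun r => (r : ℂ))
      = 1 - (M.map fun r : ℝ => (r : ℂ)) * Matrix.diagonal e := by
    congr 1
    ext r s
    rw [Matrix.sum_apply, Matrix.mul_diagonal]
    simp only [Matrix.smul_apply, Matrix.map_apply, hD, Matrix.of_apply, smul_eq_mul]
    cases s with
    | inl j =>
      rw [Finset.sum_eq_single j]
      · simp [heDef, mul_comm]
      · intro b _ hb
        simp [Ne.symm hb]
      · intro h; exact absurd (Finset.mem_univ j) h
    | inr j =>
      rw [Finset.sum_eq_single j]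
      · simp [heDef, mul_comm]
      · intro b _ hb
        simp [Ne.symm hb]
      · intro h; exact absurd (Finset.mem_univ j) h
  rw [hmat] at hnot
  have hdet : ((1 : Matrix (Fin N ⊕ Fin N) (Fin N ⊕ Fin N) ℂ) -
      (M.map fun r : ℝ => (r : ℂ)) * Matrix.diagonal e).det = 0 := by
    by_contra hd
    exact hnot ((Matrix.isUnit_iff_isUnit_det _).2 (isUnit_iff_ne_zero.2 hd))
  obtain ⟨v, hv0, hv⟩ := Matrix.exists_mulVec_eq_zero_iff.2 hdet
  have hveq : v = (M.map fun r : ℝ => (r : ℂ)) *ᵥ (Matrix.diagonal e *ᵥ v) := by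
    have h1 := hv
    rw [Matrix.sub_mulVec, Matrix.one_mulVec, ← Matrix.mulVec_mulVec, sub_eq_zero] at h1
    exact h1
  set u : Fin N ⊕ Fin N → ℂ := Matrix.diagonal e *ᵥ v with hu
  -- splitting of M.map
  have hmapmul : ∀ X Y : Matrix (Fin N ⊕ Fin N) (Fin N ⊕ Fin N) ℝ,
      ((X * Y).map fun r : ℝ => (r : ℂ)) = (X.map fun r : ℝ => (r : ℂ)) *
        (Y.map fun r : ℝ => (r : ℂ)) := by
    intro X Y
    ext r s
    simp only [Matrix.map_apply, Matrix.mul_apply]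
    push_cast
    rfl
  have hmapneg : ∀ X : Matrix (Fin N ⊕ Fin N) (Fin N ⊕ Fin N) ℝ,
      ((-X).map fun r : ℝ => (r : ℂ)) = -(X.map fun r : ℝ => (r : ℂ)) := by
    intro X; ext r s; simp [Matrix.map_apply]
  have hMvec : (M.map fun r : ℝ => (r : ℂ)) *ᵥ u
      = -(((B⁻¹ * B').map fun r : ℝ => (r : ℂ)) *ᵥ ((P.map fun r : ℝ => (r : ℂ)) *ᵥ u)) := by
    rw [hM, hmapneg, Matrix.neg_mulVec, hmapmul, ← Matrix.mulVec_mulVec]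
  -- the Phi chain
  have hkey : ∑ s, κ s * Complex.normSq (v s) ≤ c * ∑ s, κ s * Complex.normSq (u s) := by
    conv_lhs => rw [hveq]
    rw [hMvec]
    have hneg : ∑ s, κ s * Complex.normSq
        ((-(((B⁻¹ * B').map fun r : ℝ => (r : ℂ)) *ᵥ ((P.map fun r : ℝ => (r : ℂ)) *ᵥ u))) s)
        = ∑ s, κ s * Complex.normSq
          ((((B⁻¹ * B').map fun r : ℝ => (r : ℂ)) *ᵥ ((P.map fun r : ℝ => (r : ℂ)) *ᵥ u)) s) := by
      refine Finset.sum_congr rfl fun s _ => ?_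
      rw [Pi.neg_apply, Complex.normSq_neg]
    rw [hneg]
    calc ∑ s, κ s * Complex.normSq
          ((((B⁻¹ * B').map fun r : ℝ => (r : ℂ)) *ᵥ ((P.map fun r : ℝ => (r : ℂ)) *ᵥ u)) s)
        ≤ c * ∑ s, κ s * Complex.normSq (((P.map fun r : ℝ => (r : ℂ)) *ᵥ u) s) := hM1C _
      _ = c * ∑ s, κ s * Complex.normSq (u s) := by
          rw [hPswap u, hPhiswap u]
  -- bound on Phi u
  have hes : ∀ i : Fin N,
      Complex.normSq (Complex.exp (-lam * (τ i : ℂ))) ≤ Real.exp (-2 * β * τ nmax) := by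
    intro i
    have hre : (-lam * (τ i : ℂ)).re = -lam.re * τ i := by
      simp [Complex.mul_re]
    have h1 : Complex.normSq (Complex.exp (-lam * (τ i : ℂ)))
        = Real.exp (-2 * lam.re * τ i) := by
      rw [← Complex.sq_norm, Complex.norm_exp, hre, sq, ← Real.exp_add]
      ring_nf
    have h2 : -2 * lam.re * τ i ≤ -2 * β * τ nmax := by
      have ha := mul_lt_mul_of_pos_right hlam (hτpos i)
      have hb := mul_nonneg (neg_nonneg.2 hβneg.le) (sub_nonneg.2 (hτmax i))
      nlinarith
    rw [h1]
    exact Real.exp_le_exp.2 h2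
  have huPhi : ∑ s, κ s * Complex.normSq (u s)
      ≤ Real.exp (-2 * β * τ nmax) * ∑ s, κ s * Complex.normSq (v s) := by
    rw [Finset.mul_sum]
    refine Finset.sum_le_sum fun s _ => ?_
    have hus : u s = e s * v s := by
      rw [hu]; exact Matrix.mulVec_diagonal e v s
    rw [hus, Complex.normSq_mul]
    have hese : Complex.normSq (e s) ≤ Real.exp (-2 * β * τ nmax) := by
      cases s with
      | inl i => exact hes i
      | inr i => exact hes i
    calc κ s * (Complex.normSq (e s) * Complex.normSq (v s))
        ≤ κ s * (Real.exp (-2 * β * τ nmax) * Complex.normSq (v s)) := by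
          refine mul_le_mul_of_nonneg_left ?_ (hκ s).le
          exact mul_le_mul_of_nonneg_right hese (Complex.normSq_nonneg _)
      _ = Real.exp (-2 * β * τ nmax) * (κ s * Complex.normSq (v s)) := by ring
  -- c * R < 1
  have hcR : c * Real.exp (-2 * β * τ nmax) < 1 := by
    have hexp : Real.exp (-2 * β * τ nmax) = Real.exp (-(Real.log c) / 2) := by
      congr 1
      rw [hβ]
      field_simp
      ring
    rw [hexp]
    have hq2 : (c * Real.exp (-(Real.log c) / 2)) ^ 2 = c := by
      rw [mul_pow, sq (Real.exp _), ← Real.exp_add]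
      have : -(Real.log c) / 2 + -(Real.log c) / 2 = -(Real.log c) := by ring
      rw [this, Real.exp_neg, Real.exp_log hc0]
      field_simp
    nlinarith [Real.exp_pos (-(Real.log c) / 2), hc0, hc1, hq2,
      sq_nonneg (c * Real.exp (-(Real.log c) / 2) - 1)]
  -- positivity of Phi v
  have hvs : ∃ s, v s ≠ 0 := Function.ne_iff.1 hv0
  obtain ⟨s0, hs0⟩ := hvs
  have hPhiv : 0 < ∑ s, κ s * Complex.normSq (v s) := by
    have h1 : 0 < κ s0 * Complex.normSq (v s0) :=
      mul_pos (hκ s0) (Complex.normSq_pos.2 hs0)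
    refine lt_of_lt_of_le h1 ?_
    exact Finset.single_le_sum
      (fun s _ => mul_nonneg (hκ s).le (Complex.normSq_nonneg _)) (Finset.mem_univ s0)
  -- final contradiction
  have hfinal : ∑ s, κ s * Complex.normSq (v s)
      ≤ (c * Real.exp (-2 * β * τ nmax)) * ∑ s, κ s * Complex.normSq (v s) := by
    calc ∑ s, κ s * Complex.normSq (v s)
        ≤ c * ∑ s, κ s * Complex.normSq (u s) := hkey
      _ ≤ c * (Real.exp (-2 * β * τ nmax) * ∑ s, κ s * Complex.normSq (v s)) :=
          mul_le_mul_of_nonneg_left huPhi hc0.le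
      _ = _ := by ring
  nlinarith [hfinal, hcR, hPhiv]
end

section
/- Let 1 ≤ p ≤ ∞ and φ ∈ L^p([−η_M,0],ℝ^d). Then there is a unique solution z of the difference-delay system z(t) = Σ_{i=1}^M D_i(t) z(t−η_i) in L^p_loc([−η_M,∞),ℝ^d) with z = φ a.e. on [−η_M,0] and satisfying the equation for a.e. t ≥ 0. -/
open MeasureTheory Matrix Filter Set
open scoped ENNReal

/-- Euclidean norm of a vector in `ℝ^ι`. -/
noncomputable def euclNorm {ι : Type*} [Fintype ι] (x : ι → ℝ) : ℝ :=
  Real.sqrt (∑ j, (x j) ^ 2)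

/-- `z` belongs to `L^p_loc([-ηM, ∞), ℝ^d)` and satisfies the time-varying difference-delay
system `z(t) = ∑ i, D i (t) * z (t - η i)` for a.e. `t ≥ 0` (`ηM` is the largest delay;
the values of `z` on `[-ηM, 0]` are its initial condition). -/
def DelaySol (d M : ℕ) (η : Fin M → ℝ) (D : Fin M → ℝ → Matrix (Fin d) (Fin d) ℝ)
    (ηM : ℝ) (p : ℝ≥0∞) (z : ℝ → Fin d → ℝ) : Prop :=
  (∀ b : ℝ, MemLp z p (volume.restrict (Set.Icc (-ηM) b))) ∧
  (∀ᵐ t ∂(volume.restrict (Set.Ici (0 : ℝ))), z t = ∑ i, (D i t).mulVec (z (t - η i)))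

/-- `L^p` exponential stability of the difference-delay system. -/
def DelayLpStable (d M : ℕ) (η : Fin M → ℝ) (D : Fin M → ℝ → Matrix (Fin d) (Fin d) ℝ)
    (ηM : ℝ) (p : ℝ≥0∞) : Prop :=
  ∃ C > (0 : ℝ), ∃ γ > (0 : ℝ), ∀ z, DelaySol d M η D ηM p z → ∀ t ≥ (0 : ℝ),
    eLpNorm (fun θ => euclNorm (z (t + θ))) p (volume.restrict (Set.Icc (-ηM) 0)) ≤
      ENNReal.ofReal (C * Real.exp (-γ * t)) *
        eLpNorm (fun θ => euclNorm (z θ)) p (volume.restrict (Set.Icc (-ηM) 0))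

/-- `C⁰` exponential stability of the difference-delay system: continuous solutions
(the equation holding for all `t ≥ 0` forces the compatibility condition at `t = 0`). -/
def DelayC0Stable (d M : ℕ) (η : Fin M → ℝ) (D : Fin M → ℝ → Matrix (Fin d) (Fin d) ℝ)
    (ηM : ℝ) : Prop :=
  ∃ C > (0 : ℝ), ∃ γ > (0 : ℝ), ∀ z : ℝ → Fin d → ℝ,
    ContinuousOn z (Set.Ici (-ηM)) →
    (∀ t ≥ (0 : ℝ), z t = ∑ i, (D i t).mulVec (z (t - η i))) →
    ∀ t ≥ (0 : ℝ), ∀ θ ∈ Set.Icc (-ηM) (0 : ℝ),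
      euclNorm (z (t + θ)) ≤ C * Real.exp (-γ * t) *
        ⨆ θ' : Set.Icc (-ηM) (0 : ℝ), euclNorm (z (θ' : ℝ))

section AuxLemmas

variable {α E : Type*} [MeasurableSpace α] [NormedAddCommGroup E]
  {μ ν : Measure α} {p : ℝ≥0∞}

lemma aux_memℒp_add_measure {f : α → E} (hμ : MemLp f p μ) (hν : MemLp f p ν) :
    MemLp f p (μ + ν) := by
  refine ⟨hμ.1.add_measure hν.1, ?_⟩
  rcases eq_or_ne p 0 with rfl | hp0
  · simp
  rcases eq_or_ne p ∞ with rfl | hptop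
  · rw [eLpNorm_exponent_top, eLpNormEssSup]
    have h1 := enorm_ae_le_eLpNormEssSup f μ
    have h2 := enorm_ae_le_eLpNormEssSup f ν
    have hb : ∀ᵐ x ∂(μ + ν),
        (fun x => ‖f x‖ₑ) x ≤ eLpNormEssSup f μ ⊔ eLpNormEssSup f ν := by
      rw [ae_add_measure_iff]
      constructor
      · filter_upwards [h1] with x hx using hx.trans le_sup_left
      · filter_upwards [h2] with x hx using hx.trans le_sup_right
    refine (essSup_le_of_ae_le _ hb).trans_lt ?_
    have hμ2 := hμ.2; have hν2 := hν.2
    rw [eLpNorm_exponent_top] at hμ2 hν2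
    exact sup_lt_iff.mpr ⟨hμ2, hν2⟩
  · rw [eLpNorm_eq_lintegral_rpow_enorm_toReal hp0 hptop, lintegral_add_measure]
    have A := lintegral_rpow_enorm_lt_top_of_eLpNorm_lt_top hp0 hptop hμ.2
    have B := lintegral_rpow_enorm_lt_top_of_eLpNorm_lt_top hp0 hptop hν.2
    exact ENNReal.rpow_lt_top_of_nonneg (by positivity) (ENNReal.add_ne_top.mpr ⟨A.ne, B.ne⟩)

lemma aux_memℒp_union {s t : Set α} {f : α → E} (hs : MemLp f p (μ.restrict s))
    (ht : MemLp f p (μ.restrict t)) : MemLp f p (μ.restrict (s ∪ t)) :=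
  (aux_memℒp_add_measure hs ht).mono_measure (Measure.restrict_union_le _ _)

end AuxLemmas

lemma aux_mulVec_norm_le {d : ℕ} (A : Matrix (Fin d) (Fin d) ℝ) (v : Fin d → ℝ) (B : ℝ)
    (hB : ∀ k l, |A k l| ≤ B) : ‖A.mulVec v‖ ≤ (d * max B 0) * ‖v‖ := by
  have h0 : (0:ℝ) ≤ (d * max B 0) * ‖v‖ := by positivity
  rw [pi_norm_le_iff_of_nonneg h0]
  intro k
  have hk : A.mulVec v k = ∑ l, A k l * v l := rfl
  rw [hk, Real.norm_eq_abs]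
  calc |∑ l, A k l * v l| ≤ ∑ l, |A k l * v l| := Finset.abs_sum_le_sum_abs _ _
    _ ≤ ∑ _l : Fin d, max B 0 * ‖v‖ := by
        refine Finset.sum_le_sum fun l _ => ?_
        rw [abs_mul]
        refine mul_le_mul ((hB k l).trans (le_max_left _ _)) ?_ (abs_nonneg _) (le_max_right _ _)
        exact (Real.norm_eq_abs _) ▸ norm_le_pi_norm v l
    _ = (d * max B 0) * ‖v‖ := by
        simp [Finset.sum_const, Finset.card_univ, mul_assoc]


set_option maxHeartbeats 1600000 in
/-- For `1 ≤ p ≤ ∞` and `φ ∈ L^p([−ηM,0], ℝ^d)` there is a solution of the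
difference-delay system in `L^p_loc([−ηM,∞), ℝ^d)` equal to `φ` a.e. on `[−ηM,0]`, and it is
unique up to a.e. equality on `[−ηM,∞)`. -/
theorem delay_existence_uniqueness
    (d M : ℕ) (hd : 1 ≤ d) (hM : 1 ≤ M)
    (η : Fin M → ℝ) (hηpos : ∀ i, 0 < η i) (hηmono : Monotone η)
    (D : Fin M → ℝ → Matrix (Fin d) (Fin d) ℝ)
    (hDmeas : ∀ i k l, Measurable fun t => D i t k l)
    (hDbdd : ∀ i, ∃ B : ℝ, ∀ᵐ t ∂(volume.restrict (Set.Ici (0 : ℝ))), ∀ k l, |D i t k l| ≤ B)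
    (ηM : ℝ) (hηM : ηM = η ⟨M - 1, by omega⟩)
    (p : ℝ≥0∞) (hp : 1 ≤ p)
    (φ : ℝ → Fin d → ℝ) (hφ : MemLp φ p (volume.restrict (Set.Icc (-ηM) 0))) :
    (∃ z, DelaySol d M η D ηM p z ∧ z =ᵐ[volume.restrict (Set.Icc (-ηM) 0)] φ) ∧
    (∀ z z', DelaySol d M η D ηM p z → z =ᵐ[volume.restrict (Set.Icc (-ηM) 0)] φ →
      DelaySol d M η D ηM p z' → z' =ᵐ[volume.restrict (Set.Icc (-ηM) 0)] φ →
      z =ᵐ[volume.restrict (Set.Ici (-ηM))] z') := by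
  -- basic facts about the delays
  set η0 : ℝ := η ⟨0, by omega⟩ with hη0def
  have hη0 : 0 < η0 := hηpos _
  have hηle : ∀ i, η0 ≤ η i := fun i => hηmono (by simp [Fin.le_def])
  have hηiM : ∀ i, η i ≤ ηM := by
    intro i; rw [hηM]; exact hηmono (by simp [Fin.le_def]; omega)
  have hηMpos : 0 < ηM := hηM ▸ hηpos _
  -- ceiling estimate
  have hceil : ∀ t : ℝ, t ≤ (⌈t / η0⌉₊ : ℝ) * η0 := by
    intro t
    rcases le_or_gt t 0 with ht | ht
    · exact ht.trans (by positivity)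
    · rw [← div_le_iff₀ hη0]
      exact Nat.le_ceil _
  -- the measurable representative of φ
  obtain ⟨φ', hφ'sm, hφeq⟩ := hφ.1
  have hφ'mem : MemLp φ' p (volume.restrict (Set.Icc (-ηM) 0)) := hφ.ae_eq hφeq
  -- the iterative construction
  obtain ⟨g, hg0, hgS⟩ : ∃ g : ℕ → ℝ → Fin d → ℝ, (∀ t, g 0 t = φ' t) ∧
      (∀ (n : ℕ) (t : ℝ), g (n + 1) t =
        if t ≤ 0 then φ' t else ∑ i, (D i t).mulVec (g n (t - η i))) :=
    ⟨fun n => Nat.rec (motive := fun _ => ℝ → Fin d → ℝ) φ'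
      (fun _ ih t => if t ≤ 0 then φ' t else ∑ i, (D i t).mulVec (ih (t - η i))) n,
      fun _ => rfl, fun _ _ => rfl⟩
  have hgnp : ∀ (n : ℕ) (t : ℝ), t ≤ 0 → g n t = φ' t := by
    intro n t ht
    cases n with
    | zero => exact hg0 t
    | succ n => rw [hgS, if_pos ht]
  have hstab : ∀ (n : ℕ) (t : ℝ), t ≤ (n : ℝ) * η0 → g (n + 1) t = g n t := by
    intro n
    induction n with
    | zero =>
      intro t ht
      simp only [Nat.cast_zero, zero_mul] at ht
      rw [hgS, if_pos ht, hg0]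
    | succ n ih =>
      intro t ht
      rcases le_or_gt t 0 with ht0 | ht0
      · rw [hgnp _ _ ht0, hgnp _ _ ht0]
      · rw [hgS, hgS, if_neg (not_le.mpr ht0), if_neg (not_le.mpr ht0)]
        refine Finset.sum_congr rfl fun i _ => ?_
        rw [ih (t - η i) ?_]
        have := hηle i
        push_cast at ht ⊢
        linarith
  have hstab' : ∀ (n m : ℕ) (t : ℝ), n ≤ m → t ≤ (n : ℝ) * η0 → g m t = g n t := by
    intro n m t hnm ht
    induction m, hnm using Nat.le_induction with
    | base => rfl
    | succ m hnm ih =>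
      rw [hstab m t (ht.trans ?_), ih]
      have : (n : ℝ) ≤ m := by exact_mod_cast hnm
      nlinarith
  -- the solution
  obtain ⟨z, hzdef⟩ : ∃ z : ℝ → Fin d → ℝ, ∀ t, z t = g ⌈t / η0⌉₊ t :=
    ⟨fun t => g ⌈t / η0⌉₊ t, fun _ => rfl⟩
  have hz_eq : ∀ (n : ℕ) (t : ℝ), t ≤ (n : ℝ) * η0 → z t = g n t := by
    intro n t ht
    have h1 := hceil t
    calc z t = g ⌈t / η0⌉₊ t := hzdef t
      _ = g (max n ⌈t / η0⌉₊) t := (hstab' _ _ t (le_max_right _ _) h1).symm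
      _ = g n t := hstab' n _ t (le_max_left _ _) ht
  have hz_nonpos : ∀ t : ℝ, t ≤ 0 → z t = φ' t := by
    intro t ht
    rw [hz_eq 0 t (by simpa using ht), hg0]
  have hz_eqn : ∀ t : ℝ, 0 < t → z t = ∑ i, (D i t).mulVec (z (t - η i)) := by
    intro t ht
    obtain ⟨m, hm⟩ : ∃ m, ⌈t / η0⌉₊ = m + 1 :=
      ⟨⌈t / η0⌉₊ - 1, by
        have : 1 ≤ ⌈t / η0⌉₊ := Nat.one_le_iff_ne_zero.mpr
          (by positivity; )
        omega⟩
    have hzt : z t = g (m + 1) t := by rw [hzdef t, hm]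
    rw [hzt, hgS, if_neg (not_le.mpr ht)]
    refine Finset.sum_congr rfl fun i _ => ?_
    rw [hz_eq m (t - η i) ?_]
    have h1 := hceil t
    rw [hm] at h1
    have := hηle i
    push_cast at h1 ⊢
    linarith
  -- measurability of the stages
  have hmv : ∀ (A : Matrix (Fin d) (Fin d) ℝ) (v : Fin d → ℝ) (k : Fin d),
      A.mulVec v k = ∑ l, A k l * v l := fun _ _ _ => rfl
  have hgm : ∀ n : ℕ, Measurable (g n) := by
    intro n
    induction n with
    | zero =>
      have : g 0 = φ' := funext hg0
      rw [this]
      exact hφ'sm.measurable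
    | succ n ih =>
      have : g (n + 1) = fun t =>
          if t ≤ 0 then φ' t else ∑ i, (D i t).mulVec (g n (t - η i)) := funext (hgS n)
      rw [this]
      rw [measurable_pi_iff]
      intro k
      have hset : MeasurableSet {t : ℝ | t ≤ 0} := measurableSet_Iic
      have heq : (fun t => (if t ≤ 0 then φ' t else ∑ i, (D i t).mulVec (g n (t - η i))) k)
          = fun t => if t ≤ 0 then φ' t k else ∑ i, ∑ l, D i t k l * g n (t - η i) l := by
        funext t
        by_cases ht : t ≤ 0
        · simp [ht]
        · simp only [if_neg ht]
          rw [Finset.sum_apply]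
          exact Finset.sum_congr rfl fun i _ => hmv _ _ _
      rw [heq]
      refine Measurable.ite hset ((measurable_pi_apply k).comp hφ'sm.measurable) ?_
      refine Finset.measurable_sum _ fun i _ => Finset.measurable_sum _ fun l _ => ?_
      exact (hDmeas i k l).mul ((measurable_pi_apply l).comp (ih.comp (measurable_sub_const (η i))))
  have hzm : ∀ (n : ℕ), AEStronglyMeasurable z (volume.restrict (Icc (-ηM) ((n : ℝ) * η0))) := by
    intro n
    refine ((hgm n).aestronglyMeasurable).congr ?_
    filter_upwards [ae_restrict_mem measurableSet_Icc] with t ht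
    exact (hz_eq n t ht.2).symm
  -- the bounds on the matrices
  choose B hB using hDbdd
  -- the MemLp property, step by step
  have Hmem : ∀ n : ℕ, MemLp z p (volume.restrict (Icc (-ηM) ((n : ℝ) * η0))) := by
    intro n
    induction n with
    | zero =>
      simp only [Nat.cast_zero, zero_mul]
      refine hφ'mem.ae_eq ?_
      filter_upwards [ae_restrict_mem measurableSet_Icc] with t ht
      exact (hz_nonpos t ht.2).symm
    | succ n ih =>
      have hsplit : Icc (-ηM) (((n : ℕ) + 1 : ℝ) * η0)
          = Icc (-ηM) ((n : ℝ) * η0) ∪ Ioc ((n : ℝ) * η0) (((n : ℝ) + 1) * η0) := by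
        have h0 : (0:ℝ) ≤ (n : ℝ) * η0 := by positivity
        rw [Icc_union_Ioc_eq_Icc (by linarith) (by nlinarith)]
      push_cast
      rw [hsplit]
      refine aux_memℒp_union ih ?_
      -- the new piece
      have hsub0 : Ioc ((n : ℝ) * η0) (((n : ℝ) + 1) * η0) ⊆ Ici (0 : ℝ) := by
        intro x hx
        have : (0:ℝ) ≤ (n : ℝ) * η0 := by positivity
        exact le_of_lt (this.trans_lt hx.1)
      -- translated pieces
      have hti : ∀ i, MemLp (fun t => z (t - η i)) p
          (volume.restrict (Ioc ((n : ℝ) * η0) (((n : ℝ) + 1) * η0))) := by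
        intro i
        have hemb : MeasurableEmbedding (fun t : ℝ => t - η i) :=
          (MeasurableEquiv.subRight (η i)).measurableEmbedding
        have hpre : (fun t : ℝ => t - η i) ⁻¹' Ioc ((n : ℝ) * η0 - η i) (((n : ℝ) + 1) * η0 - η i)
            = Ioc ((n : ℝ) * η0) (((n : ℝ) + 1) * η0) := by
          rw [preimage_sub_const_Ioc]
          ring_nf
        have hmp : MeasurePreserving (fun t : ℝ => t - η i)
            (volume.restrict (Ioc ((n : ℝ) * η0) (((n : ℝ) + 1) * η0)))
            (volume.restrict (Ioc ((n : ℝ) * η0 - η i) (((n : ℝ) + 1) * η0 - η i))) := by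
          have := (measurePreserving_sub_right (volume : Measure ℝ) (η i)).restrict_preimage_emb
            hemb (Ioc ((n : ℝ) * η0 - η i) (((n : ℝ) + 1) * η0 - η i))
          rwa [hpre] at this
        have hzs : MemLp z p
            (volume.restrict (Ioc ((n : ℝ) * η0 - η i) (((n : ℝ) + 1) * η0 - η i))) := by
          refine ih.mono_measure (Measure.restrict_mono ?_ le_rfl)
          intro x hx
          have h1 := hηle i
          have h2 := hηiM i
          constructor
          · have : -ηM ≤ (n : ℝ) * η0 - η i := by nlinarith [hx.1]
            linarith [hx.1, this]
          · nlinarith [hx.2]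
        exact hzs.comp_measurePreserving hmp
      -- the dominating function
      have hF : MemLp (fun t => ∑ i, ((d : ℝ) * max (B i) 0) * ‖z (t - η i)‖) p
          (volume.restrict (Ioc ((n : ℝ) * η0) (((n : ℝ) + 1) * η0))) := by
        refine memLp_finsetSum _ fun i _ => ((hti i).norm.const_mul _)
      -- a.e. measurability of z on the piece
      have hzmA : AEStronglyMeasurable z
          (volume.restrict (Ioc ((n : ℝ) * η0) (((n : ℝ) + 1) * η0))) := by
        refine (hzm (n+1)).mono_measure (Measure.restrict_mono ?_ le_rfl)
        intro x hx
        push_cast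
        constructor
        · have : (0:ℝ) ≤ (n : ℝ) * η0 := by positivity
          linarith [hx.1, hηMpos]
        · exact hx.2
      refine hF.of_le hzmA ?_
      -- the a.e. bound
      have hBs : ∀ᵐ t ∂(volume.restrict (Ioc ((n : ℝ) * η0) (((n : ℝ) + 1) * η0))),
          ∀ i : Fin M, ∀ k l, |D i t k l| ≤ B i := by
        rw [ae_all_iff]
        intro i
        exact ae_restrict_of_ae_restrict_of_subset hsub0 (hB i)
      filter_upwards [hBs, ae_restrict_mem measurableSet_Ioc] with t hDb ht
      have ht0 : 0 < t := by
        have : (0:ℝ) ≤ (n : ℝ) * η0 := by positivity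
        exact this.trans_lt ht.1
      rw [hz_eqn t ht0]
      calc ‖∑ i, (D i t).mulVec (z (t - η i))‖
          ≤ ∑ i, ‖(D i t).mulVec (z (t - η i))‖ := norm_sum_le _ _
        _ ≤ ∑ i, ((d : ℝ) * max (B i) 0) * ‖z (t - η i)‖ :=
            Finset.sum_le_sum fun i _ => aux_mulVec_norm_le _ _ _ (hDb i)
        _ ≤ ‖∑ i, ((d : ℝ) * max (B i) 0) * ‖z (t - η i)‖‖ := le_abs_self _
  -- z agrees with φ on the initial interval
  have hzφ : z =ᵐ[volume.restrict (Set.Icc (-ηM) 0)] φ := by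
    filter_upwards [hφeq, ae_restrict_mem measurableSet_Icc] with t h1 h2
    rw [hz_nonpos t h2.2, h1]
  -- z is a solution
  have hzsol : DelaySol d M η D ηM p z := by
    constructor
    · intro b
      refine (Hmem ⌈b / η0⌉₊).mono_measure (Measure.restrict_mono ?_ le_rfl)
      exact Icc_subset_Icc_right (hceil b)
    · have h0 : ∀ᵐ t ∂(volume.restrict (Set.Ici (0 : ℝ))), t ≠ 0 := by
        rw [ae_iff]
        have hs : {t : ℝ | ¬t ≠ 0} = {(0:ℝ)} := by ext x; simp
        rw [hs, Measure.restrict_apply (measurableSet_singleton 0)]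
        exact measure_mono_null (inter_subset_left) (by simp)
      filter_upwards [h0, ae_restrict_mem measurableSet_Ici] with t h1 h2
      exact hz_eqn t (lt_of_le_of_ne h2 (Ne.symm h1))
  refine ⟨⟨z, hzsol, hzφ⟩, ?_⟩
  -- uniqueness
  intro w w' hw hwφ hw' hw'φ
  have Un : ∀ n : ℕ, w =ᵐ[volume.restrict (Icc (-ηM) ((n : ℝ) * η0))] w' := by
    intro n
    induction n with
    | zero =>
      simp only [Nat.cast_zero, zero_mul]
      exact hwφ.trans hw'φ.symm
    | succ n ih =>
      have h0 : (0:ℝ) ≤ (n : ℝ) * η0 := by positivity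
      have hsplit : Icc (-ηM) (((n : ℕ) + 1 : ℝ) * η0)
          = Icc (-ηM) ((n : ℝ) * η0) ∪ Ioc ((n : ℝ) * η0) (((n : ℝ) + 1) * η0) := by
        rw [Icc_union_Ioc_eq_Icc (by linarith) (by nlinarith)]
      push_cast
      rw [hsplit]
      have hsub0 : Ioc ((n : ℝ) * η0) (((n : ℝ) + 1) * η0) ⊆ Ici (0 : ℝ) :=
        fun x hx => le_of_lt (h0.trans_lt hx.1)
      -- the bad set from the inductive hypothesis
      have hbad : volume ({a : ℝ | ¬ w a = w' a} ∩ Icc (-ηM) ((n : ℝ) * η0)) = 0 := by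
        have := ih
        rw [EventuallyEq, ae_iff, Measure.restrict_apply' measurableSet_Icc] at this
        exact this
      have e3 : ∀ i : Fin M, ∀ᵐ t ∂(volume.restrict (Ioc ((n : ℝ) * η0) (((n : ℝ) + 1) * η0))),
          w (t - η i) = w' (t - η i) := by
        intro i
        have hpre : volume ((fun t : ℝ => t - η i) ⁻¹'
            ({a : ℝ | ¬ w a = w' a} ∩ Icc (-ηM) ((n : ℝ) * η0))) = 0 :=
          (measurePreserving_sub_right (volume : Measure ℝ)
            (η i)).quasiMeasurePreserving.preimage_null hbad
        rw [ae_iff, Measure.restrict_apply' measurableSet_Ioc]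
        refine measure_mono_null ?_ hpre
        intro x hx
        obtain ⟨hx1, hx2⟩ := hx
        have h1 := hηle i
        have h2 := hηiM i
        refine ⟨hx1, ?_, ?_⟩
        · show -ηM ≤ x - η i
          have := hx2.1; linarith
        · show x - η i ≤ (n : ℝ) * η0
          have := hx2.2; nlinarith
      have key : w =ᵐ[volume.restrict (Ioc ((n : ℝ) * η0) (((n : ℝ) + 1) * η0))] w' := by
        have e1 := ae_restrict_of_ae_restrict_of_subset hsub0 hw.2
        have e2 := ae_restrict_of_ae_restrict_of_subset hsub0 hw'.2
        filter_upwards [e1, e2, ae_all_iff.mpr e3] with t h1 h2 h3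
        rw [h1, h2]
        exact Finset.sum_congr rfl fun i _ => by rw [h3 i]
      exact ((ae_add_measure_iff.mpr ⟨ih, key⟩).filter_mono
        (ae_mono (Measure.restrict_union_le _ _)))
  have Un' : ∀ n : ℕ, volume ({a : ℝ | ¬ w a = w' a} ∩ Icc (-ηM) ((n : ℝ) * η0)) = 0 := by
    intro n
    have := Un n
    rwa [EventuallyEq, ae_iff, Measure.restrict_apply' measurableSet_Icc] at this
  rw [EventuallyEq, ae_iff, Measure.restrict_apply' measurableSet_Ici]
  refine measure_mono_null ?_
    (measure_iUnion_null (s := fun n : ℕ => {a : ℝ | ¬ w a = w' a} ∩ Icc (-ηM) ((n : ℝ) * η0)) Un')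
  intro x hx
  exact mem_iUnion.mpr ⟨⌈x / η0⌉₊, hx.1, hx.2, hceil x⟩
end

section
/- Let Q be a real n×n matrix with Q + Qᵀ positive definite. Then Id + Q is invertible, there is a unique n×n matrix R with (Id + Q)R = Id − Q, and its spectral norm satisfies ‖R‖ < 1. Conversely, if R is a real n×n matrix with spectral norm ‖R‖ < 1, then Id + R is invertible, there is a unique n×n matrix Q with (Id + Q)R = Id − Q, and Q + Qᵀ ≥ ((1 − ‖R‖)/(1 + ‖R‖))·Id. -/
open Matrix

/-- Spectral norm of a real matrix: the operator norm with respect to the Euclidean norm. -/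
noncomputable def specNorm {ι : Type*} [Fintype ι] [DecidableEq ι] (B : Matrix ι ι ℝ) : ℝ :=
  ‖Matrix.toEuclideanCLM (𝕜 := ℝ) B‖

open scoped RealInnerProductSpace

namespace CayleyAux

open scoped RealInnerProductSpace

variable {n : ℕ}

noncomputable abbrev phi (A : Matrix (Fin n) (Fin n) ℝ) :
    EuclideanSpace ℝ (Fin n) →L[ℝ] EuclideanSpace ℝ (Fin n) :=
  Matrix.toEuclideanCLM (𝕜 := ℝ) A

lemma phi_transpose (A : Matrix (Fin n) (Fin n) ℝ) :
    phi Aᵀ = ContinuousLinearMap.adjoint (phi A) := by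
  rw [← ContinuousLinearMap.star_eq_adjoint, ← map_star]
  rw [Matrix.star_eq_conjTranspose, Matrix.conjTranspose_eq_transpose_of_trivial]

lemma inner_phi_symm (A : Matrix (Fin n) (Fin n) ℝ) (x : Fin n → ℝ) :
    ⟪(WithLp.equiv 2 (Fin n → ℝ)).symm x, phi A ((WithLp.equiv 2 (Fin n → ℝ)).symm x)⟫ =
      star x ⬝ᵥ (A *ᵥ x) := by
  exact dotProduct_comm _ _

lemma inner_phi (A : Matrix (Fin n) (Fin n) ℝ) (x : EuclideanSpace ℝ (Fin n)) :
    ⟪x, phi A x⟫ = star (WithLp.equiv 2 (Fin n → ℝ) x) ⬝ᵥ (A *ᵥ (WithLp.equiv 2 (Fin n → ℝ) x)) := by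
  rw [← inner_phi_symm]; simp

lemma phi_pos {A : Matrix (Fin n) (Fin n) ℝ} (hA : A.PosDef) (x : EuclideanSpace ℝ (Fin n))
    (hx : x ≠ 0) : 0 < ⟪x, phi A x⟫ := by
  rw [inner_phi]
  refine (Matrix.posDef_iff_dotProduct_mulVec.mp hA).2 ?_
  intro h
  apply hx
  have := congrArg (WithLp.equiv 2 (Fin n → ℝ)).symm h
  simpa using this

lemma coercive {A : Matrix (Fin n) (Fin n) ℝ} (hA : A.PosDef) :
    ∃ c > 0, ∀ x : EuclideanSpace ℝ (Fin n), c * ‖x‖ ^ 2 ≤ ⟪x, phi A x⟫ := by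
  rcases Nat.eq_zero_or_pos n with hn | hn
  · refine ⟨1, one_pos, fun x => ?_⟩
    subst hn
    have hx : x = 0 := by ext i; exact absurd i.2 (by omega)
    simp [hx]
  · have hne : (Metric.sphere (0 : EuclideanSpace ℝ (Fin n)) 1).Nonempty := by
      refine ⟨EuclideanSpace.single ⟨0, hn⟩ (1 : ℝ), ?_⟩
      simp [mem_sphere_zero_iff_norm]
    have hcont : Continuous fun x : EuclideanSpace ℝ (Fin n) => ⟪x, phi A x⟫ :=
      continuous_id.inner (phi A).continuous
    obtain ⟨x₀, hx₀s, hmin⟩ := (isCompact_sphere (0 : EuclideanSpace ℝ (Fin n)) 1).exists_isMinOn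
      hne hcont.continuousOn
    have hx₀norm : ‖x₀‖ = 1 := mem_sphere_zero_iff_norm.mp hx₀s
    have hx₀ : x₀ ≠ 0 := by intro h; rw [h] at hx₀norm; simp at hx₀norm
    refine ⟨⟪x₀, phi A x₀⟫, phi_pos hA x₀ hx₀, fun x => ?_⟩
    rcases eq_or_ne x 0 with rfl | hx
    · simp
    · have hxn : (0:ℝ) < ‖x‖ := norm_pos_iff.mpr hx
      set y : EuclideanSpace ℝ (Fin n) := ‖x‖⁻¹ • x with hy
      have hyn : ‖y‖ = 1 := by
        rw [hy, norm_smul]; simp [abs_of_pos hxn, inv_mul_cancel₀ hxn.ne']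
      have hys : y ∈ Metric.sphere (0 : EuclideanSpace ℝ (Fin n)) 1 :=
        mem_sphere_zero_iff_norm.mpr hyn
      have h1 : ⟪x₀, phi A x₀⟫ ≤ ⟪y, phi A y⟫ := hmin hys
      have h2 : ⟪y, phi A y⟫ = ‖x‖⁻¹ * (‖x‖⁻¹ * ⟪x, phi A x⟫) := by
        rw [hy, (phi A).map_smul, real_inner_smul_left, real_inner_smul_right]
      rw [h2] at h1
      have := mul_le_mul_of_nonneg_left h1 (le_of_lt (mul_pos hxn hxn))
      calc ⟪x₀, phi A x₀⟫ * ‖x‖ ^ 2 = ‖x‖ * ‖x‖ * ⟪x₀, phi A x₀⟫ := by ring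
        _ ≤ ‖x‖ * ‖x‖ * (‖x‖⁻¹ * (‖x‖⁻¹ * ⟪x, phi A x⟫)) := this
        _ = ⟪x, phi A x⟫ := by field_simp

lemma symmQuad (Q : Matrix (Fin n) (Fin n) ℝ) (x : Fin n → ℝ) :
    x ⬝ᵥ ((Q + Qᵀ) *ᵥ x) = 2 * (x ⬝ᵥ (Q *ᵥ x)) := by
  rw [Matrix.add_mulVec, dotProduct_add]
  rw [Matrix.dotProduct_mulVec x Qᵀ x, Matrix.vecMul_transpose, dotProduct_comm]
  ring

lemma unitOnePlus (Q : Matrix (Fin n) (Fin n) ℝ) (hQ : (Q + Qᵀ).PosDef) :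
    IsUnit ((1 : Matrix (Fin n) (Fin n) ℝ) + Q) := by
  rw [← Matrix.mulVec_injective_iff_isUnit]
  have h0 : ∀ d : Fin n → ℝ, (1 + Q) *ᵥ d = 0 → d = 0 := by
    intro d hd
    by_contra hne
    have hpos : 0 < d ⬝ᵥ ((Q + Qᵀ) *ᵥ d) := by simpa using (Matrix.posDef_iff_dotProduct_mulVec.mp hQ).2 hne
    have hsym := symmQuad Q d
    have hdd : 0 ≤ d ⬝ᵥ d := by
      simpa [dotProduct] using Finset.sum_nonneg fun i (_ : i ∈ Finset.univ) => mul_self_nonneg (d i)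
    have hzero : d ⬝ᵥ ((1 + Q) *ᵥ d) = 0 := by rw [hd]; simp
    rw [Matrix.add_mulVec, dotProduct_add, Matrix.one_mulVec] at hzero
    nlinarith [hpos, hsym, hdd]
  intro a b hab
  have h : (1 + Q) *ᵥ (a - b) = 0 := by rw [Matrix.mulVec_sub, hab, sub_self]
  exact sub_eq_zero.mp (h0 _ h)

set_option maxHeartbeats 1000000 in
lemma norm_lt_one (Q R : Matrix (Fin n) (Fin n) ℝ)
    (hcoer' : ∃ c > 0, ∀ x : EuclideanSpace ℝ (Fin n), c * ‖x‖ ^ 2 ≤ ⟪x, phi (Q + Qᵀ) x⟫)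
    (hR : (1 + Q) * R = 1 - Q) : ‖phi R‖ < 1 := by
  obtain ⟨c, hc, hcoer⟩ := hcoer'
  set T := phi Q with hT
  set S := phi R with hS
  have hq : (1 + T) * S = 1 - T := by
    have h := congrArg (Matrix.toEuclideanCLM (𝕜 := ℝ)) hR
    simpa [_root_.map_mul, _root_.map_add, _root_.map_sub, _root_.map_one, ← hT, ← hS] using h
  set M := ‖T‖ with hM
  have hM0 : 0 ≤ M := norm_nonneg _
  set D : ℝ := 1 + M ^ 2 with hD
  have hD0 : 0 < D := by positivity
  set k : ℝ := max ((D - c) / (c + D)) 0 with hk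
  have hcD : (0:ℝ) < c + D := by positivity
  have hk1 : k < 1 := by
    rw [hk, max_lt_iff]
    constructor
    · rw [div_lt_one hcD]; linarith
    · norm_num
  have hk0 : 0 ≤ k := le_max_right _ _
  set K := Real.sqrt k with hK
  have hK0 : 0 ≤ K := Real.sqrt_nonneg _
  have hK2 : K ^ 2 = k := Real.sq_sqrt hk0
  have hK1 : K < 1 := by nlinarith
  have hbound : ∀ x : EuclideanSpace ℝ (Fin n), ‖S x‖ ≤ K * ‖x‖ := by
    intro x
    set v := S x with hv
    set w := x + v with hw
    have h1 : v + T v = x - T x := by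
      have h := congrArg (fun f : EuclideanSpace ℝ (Fin n) →L[ℝ] EuclideanSpace ℝ (Fin n) => f x) hq
      simpa [ContinuousLinearMap.mul_apply, ContinuousLinearMap.add_apply,
        ContinuousLinearMap.sub_apply, ContinuousLinearMap.one_apply, ← hv] using h
    have h2 : T x + (v + T v) = x := by rw [h1]; abel
    have hTw : T w = x - v := by
      rw [hw, map_add, eq_sub_iff_add_eq]
      calc T x + T v + v = T x + (v + T v) := by abel
        _ = x := h2
    have hphiA : phi (Q + Qᵀ) = T + ContinuousLinearMap.adjoint T := by
      have h0 : phi (Q + Qᵀ) = phi Q + phi Qᵀ := map_add (Matrix.toEuclideanCLM (𝕜 := ℝ)) Q Qᵀ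
      rw [h0, phi_transpose, hT]
    have hwquad : ⟪w, phi (Q + Qᵀ) w⟫ = 2 * (‖x‖ ^ 2 - ‖v‖ ^ 2) := by
      rw [hphiA, ContinuousLinearMap.add_apply, inner_add_right,
        ContinuousLinearMap.adjoint_inner_right]
      have : ⟪w, T w⟫ = ‖x‖ ^ 2 - ‖v‖ ^ 2 := by
        rw [hTw, hw, inner_add_left, inner_sub_right, inner_sub_right,
          real_inner_self_eq_norm_sq, real_inner_self_eq_norm_sq, real_inner_comm v x]
        ring
      linarith [this, real_inner_comm (T w) w]
    have hcw : c * ‖w‖ ^ 2 ≤ 2 * (‖x‖ ^ 2 - ‖v‖ ^ 2) := by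
      rw [← hwquad]; exact hcoer w
    have hxv : ‖x - v‖ ≤ M * ‖w‖ := by rw [← hTw]; exact T.le_opNorm w
    have hpar : ‖w‖ ^ 2 + ‖x - v‖ ^ 2 = 2 * ‖x‖ ^ 2 + 2 * ‖v‖ ^ 2 := by
      rw [hw, norm_add_sq_real, norm_sub_sq_real]; ring
    have hw0 : 0 ≤ ‖w‖ := norm_nonneg _
    have hxv0 : 0 ≤ ‖x - v‖ := norm_nonneg _
    have hxv2 : ‖x - v‖ ^ 2 ≤ M ^ 2 * ‖w‖ ^ 2 := by nlinarith
    have hexp : D * ‖w‖ ^ 2 = ‖w‖ ^ 2 + M ^ 2 * ‖w‖ ^ 2 := by rw [hD]; ring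
    have hDw : 2 * ‖x‖ ^ 2 + 2 * ‖v‖ ^ 2 ≤ D * ‖w‖ ^ 2 := by linarith
    have h3 := mul_le_mul_of_nonneg_left hcw hD0.le
    have h4 := mul_le_mul_of_nonneg_left hDw hc.le
    have hkey : ‖v‖ ^ 2 * (c + D) ≤ (D - c) * ‖x‖ ^ 2 := by nlinarith [h3, h4]
    have hdiv : ((D - c) / (c + D)) * (c + D) = D - c := div_mul_cancel₀ _ hcD.ne'
    have heq : (((D - c) / (c + D)) * ‖x‖ ^ 2) * (c + D) = (D - c) * ‖x‖ ^ 2 := by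
      rw [mul_comm ((D - c) / (c + D)) (‖x‖ ^ 2), mul_assoc, hdiv]; ring
    have h6 : ‖v‖ ^ 2 * (c + D) ≤ (((D - c) / (c + D)) * ‖x‖ ^ 2) * (c + D) := by
      rw [heq]; exact hkey
    have h7 : ‖v‖ ^ 2 ≤ ((D - c) / (c + D)) * ‖x‖ ^ 2 := le_of_mul_le_mul_right h6 hcD
    have h5 := mul_le_mul_of_nonneg_right (le_max_left ((D - c) / (c + D)) (0:ℝ)) (sq_nonneg ‖x‖)
    have hv2 : ‖v‖ ^ 2 ≤ k * ‖x‖ ^ 2 := by rw [hk]; linarith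
    have : ‖v‖ ^ 2 ≤ (K * ‖x‖) ^ 2 := by rw [mul_pow, hK2]; exact hv2
    calc ‖v‖ = Real.sqrt (‖v‖ ^ 2) := (Real.sqrt_sq (norm_nonneg _)).symm
      _ ≤ Real.sqrt ((K * ‖x‖) ^ 2) := Real.sqrt_le_sqrt this
      _ = K * ‖x‖ := Real.sqrt_sq (by positivity)
  calc ‖S‖ ≤ K := S.opNorm_le_bound hK0 hbound
    _ < 1 := hK1

lemma isUnit_one_add_of_norm_lt_one (R : Matrix (Fin n) (Fin n) ℝ)
    (h : ‖phi R‖ < 1) : IsUnit ((1 : Matrix (Fin n) (Fin n) ℝ) + R) := by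
  rw [← Matrix.mulVec_injective_iff_isUnit]
  have h0 : ∀ d : Fin n → ℝ, (1 + R) *ᵥ d = 0 → d = 0 := by
    intro d hd
    set x' : EuclideanSpace ℝ (Fin n) := (WithLp.equiv 2 (Fin n → ℝ)).symm d with hx'
    have hphx : phi (1 + R) x' = 0 := by
      rw [hx', WithLp.equiv_symm_apply, Matrix.toEuclideanCLM_toLp, hd]
      simp
    have hsum : phi (1 + R) x' = x' + phi R x' := by
      have h1 : phi (1 + R) = 1 + phi R := by
        unfold phi
        rw [_root_.map_add, _root_.map_one]
      rw [h1, ContinuousLinearMap.add_apply, ContinuousLinearMap.one_apply]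
    have hxr : x' = -(phi R x') := by
      rw [hsum] at hphx
      linear_combination (norm := module) hphx
    have hle : ‖x'‖ ≤ ‖phi R‖ * ‖x'‖ := by
      calc ‖x'‖ = ‖-(phi R x')‖ := congrArg norm hxr
        _ = ‖phi R x'‖ := norm_neg _
        _ ≤ ‖phi R‖ * ‖x'‖ := (phi R).le_opNorm x'
    have hx0 : ‖x'‖ = 0 := by nlinarith [norm_nonneg x']
    have : x' = 0 := norm_eq_zero.mp hx0
    have := congrArg (WithLp.equiv 2 (Fin n → ℝ)) this
    simpa [hx'] using this
  intro a b hab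
  have h : (1 + R) *ᵥ (a - b) = 0 := by rw [Matrix.mulVec_sub, hab, sub_self]
  exact sub_eq_zero.mp (h0 _ h)

lemma cayley_reverse_eq (R A : Matrix (Fin n) (Fin n) ℝ) (h : (1 + A) * R = 1 - A) :
    A * (1 + R) = 1 - R := by
  rw [add_mul, one_mul] at h
  have h' : A * R = 1 - A - R := eq_sub_of_add_eq' h
  rw [mul_add, mul_one, h']
  abel

set_option maxHeartbeats 1000000 in
lemma posSemidef_of_eq (R Q' : Matrix (Fin n) (Fin n) ℝ) (hr : ‖phi R‖ < 1)
    (hQ' : (1 + Q') * R = 1 - Q') :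
    (Q' + Q'ᵀ - ((1 - ‖phi R‖) / (1 + ‖phi R‖)) • (1 : Matrix (Fin n) (Fin n) ℝ)).PosSemidef := by
  set r := ‖phi R‖ with hrdef
  set κ : ℝ := (1 - r) / (1 + r) with hκdef
  have hr0 : 0 ≤ r := norm_nonneg _
  have h1r : (0:ℝ) < 1 + r := by linarith
  have hκ0 : 0 ≤ κ := div_nonneg (by linarith) h1r.le
  have hκ : κ * (1 + r) = 1 - r := div_mul_cancel₀ _ h1r.ne'
  have hE : Q' * (1 + R) = 1 - R := cayley_reverse_eq R Q' hQ'
  set S := phi R with hS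
  set P := phi Q' with hP
  have hPS : P * (1 + S) = 1 - S := by
    have h := congrArg (Matrix.toEuclideanCLM (𝕜 := ℝ)) hE
    simpa [_root_.map_mul, _root_.map_add, _root_.map_sub, _root_.map_one, ← hS, ← hP] using h
  have hu : IsUnit ((1 : EuclideanSpace ℝ (Fin n) →L[ℝ] EuclideanSpace ℝ (Fin n)) + S) := by
    have h1 := (isUnit_one_add_of_norm_lt_one R hr).map (Matrix.toEuclideanCLM (𝕜 := ℝ))
    have h2 : Matrix.toEuclideanCLM (𝕜 := ℝ) (1 + R) = 1 + S := by
      rw [_root_.map_add, _root_.map_one]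
    rwa [h2] at h1
  rw [Matrix.posSemidef_iff_dotProduct_mulVec]
  constructor
  · show (Q' + Q'ᵀ - κ • 1)ᴴ = _
    rw [Matrix.conjTranspose_sub, Matrix.conjTranspose_add, Matrix.conjTranspose_smul,
      Matrix.conjTranspose_one, Matrix.conjTranspose_eq_transpose_of_trivial,
      Matrix.conjTranspose_eq_transpose_of_trivial, Matrix.transpose_transpose, star_trivial]
    abel
  · intro x
    set x' : EuclideanSpace ℝ (Fin n) := (WithLp.equiv 2 (Fin n → ℝ)).symm x with hx'
    rw [← inner_phi_symm]
    have hsm : phi (n := n) (κ • (1 : Matrix (Fin n) (Fin n) ℝ))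
        = κ • (1 : EuclideanSpace ℝ (Fin n) →L[ℝ] EuclideanSpace ℝ (Fin n)) := by
      unfold phi
      rw [_root_.map_smul, _root_.map_one]
    have hB : phi (Q' + Q'ᵀ - κ • 1) = P + ContinuousLinearMap.adjoint P - κ • 1 := by
      have h1 : phi (Q' + Q'ᵀ - κ • 1) = phi (Q' + Q'ᵀ) - phi (κ • 1) := by
        unfold phi; rw [_root_.map_sub]
      have h2 : phi (Q' + Q'ᵀ) = phi Q' + phi Q'ᵀ := by
        unfold phi; rw [_root_.map_add]
      rw [h1, h2, phi_transpose, hsm, hP]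
    rw [hB]
    set u := hu.unit with hudef
    set U : EuclideanSpace ℝ (Fin n) →L[ℝ] EuclideanSpace ℝ (Fin n) := ↑u⁻¹ with hU
    set y : EuclideanSpace ℝ (Fin n) := U x' with hy
    have hxy : x' = y + S y := by
      have h1 : ((1 + S) * U) x' = x' := by
        rw [hU, ← IsUnit.unit_spec hu, ← hudef, Units.mul_inv, ContinuousLinearMap.one_apply]
      conv_lhs => rw [← h1]
      rw [ContinuousLinearMap.mul_apply, ContinuousLinearMap.add_apply,
        ContinuousLinearMap.one_apply, ← hy]
    have hPx : P x' = y - S y := by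
      have h2 : (y + S y) = (1 + S) y := by
        rw [ContinuousLinearMap.add_apply, ContinuousLinearMap.one_apply]
      conv_lhs => rw [hxy]
      rw [h2, ← ContinuousLinearMap.mul_apply, hPS, ContinuousLinearMap.sub_apply,
        ContinuousLinearMap.one_apply]
    have hinner : ⟪x', P x'⟫ = ‖y‖ ^ 2 - ‖S y‖ ^ 2 := by
      rw [hPx]
      conv_lhs => rw [hxy]
      rw [inner_add_left, inner_sub_right, inner_sub_right,
        real_inner_self_eq_norm_sq, real_inner_self_eq_norm_sq, real_inner_comm (S y) y]
      ring
    have hmain : ⟪x', (P + ContinuousLinearMap.adjoint P - κ • 1) x'⟫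
        = 2 * ⟪x', P x'⟫ - κ * ‖x'‖ ^ 2 := by
      rw [ContinuousLinearMap.sub_apply, ContinuousLinearMap.add_apply,
        ContinuousLinearMap.smul_apply, ContinuousLinearMap.one_apply,
        inner_sub_right, inner_add_right, ContinuousLinearMap.adjoint_inner_right,
        real_inner_smul_right, real_inner_self_eq_norm_sq]
      linarith [real_inner_comm (P x') x']
    rw [hmain, hinner]
    have hSy : ‖S y‖ ≤ r * ‖y‖ := S.le_opNorm y
    have hxn : ‖x'‖ ≤ (1 + r) * ‖y‖ := by
      calc ‖x'‖ = ‖y + S y‖ := by rw [← hxy]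
        _ ≤ ‖y‖ + ‖S y‖ := norm_add_le _ _
        _ ≤ (1 + r) * ‖y‖ := by nlinarith
    have hx2 : ‖x'‖ ^ 2 ≤ (1 + r) ^ 2 * ‖y‖ ^ 2 := by nlinarith [norm_nonneg x', norm_nonneg y]
    have hS2 : ‖S y‖ ^ 2 ≤ r ^ 2 * ‖y‖ ^ 2 := by
      nlinarith [norm_nonneg (S y), norm_nonneg y]
    have hκ2 : κ * (1 + r) ^ 2 = 1 - r ^ 2 := by
      rw [pow_two, ← mul_assoc, hκ]; ring
    have hκx : κ * ‖x'‖ ^ 2 ≤ (1 - r ^ 2) * ‖y‖ ^ 2 := by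
      calc κ * ‖x'‖ ^ 2 ≤ κ * ((1 + r) ^ 2 * ‖y‖ ^ 2) := mul_le_mul_of_nonneg_left hx2 hκ0
        _ = (κ * (1 + r) ^ 2) * ‖y‖ ^ 2 := by ring
        _ = (1 - r ^ 2) * ‖y‖ ^ 2 := by rw [hκ2]
    nlinarith [sq_nonneg ‖y‖]

end CayleyAux

open CayleyAux

/-- If `Q + Qᵀ` is positive definite then `Id + Q` is invertible, the
equation `(Id + Q) R = Id − Q` has a unique solution `R`, and `‖R‖ < 1` in spectral norm.
Conversely, if `‖R‖ < 1` then `Id + R` is invertible, there is a unique `Q'` with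
`(Id + Q') R = Id − Q'`, and `Q' + Q'ᵀ ≥ ((1 − ‖R‖)/(1 + ‖R‖))·Id`. -/
theorem cayley_dissipative_contractive
    (n : ℕ) (Q : Matrix (Fin n) (Fin n) ℝ) (hQ : (Q + Qᵀ).PosDef) :
    (IsUnit ((1 : Matrix (Fin n) (Fin n) ℝ) + Q) ∧
      (∃! R : Matrix (Fin n) (Fin n) ℝ, (1 + Q) * R = 1 - Q) ∧
      (∀ R : Matrix (Fin n) (Fin n) ℝ, (1 + Q) * R = 1 - Q → specNorm R < 1)) ∧
    (∀ R : Matrix (Fin n) (Fin n) ℝ, specNorm R < 1 →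
      IsUnit ((1 : Matrix (Fin n) (Fin n) ℝ) + R) ∧
      (∃! Q' : Matrix (Fin n) (Fin n) ℝ, (1 + Q') * R = 1 - Q') ∧
      (∀ Q' : Matrix (Fin n) (Fin n) ℝ, (1 + Q') * R = 1 - Q' →
        (Q' + Q'ᵀ - ((1 - specNorm R) / (1 + specNorm R)) •
          (1 : Matrix (Fin n) (Fin n) ℝ)).PosSemidef)) := by
  have hspec : ∀ R : Matrix (Fin n) (Fin n) ℝ, specNorm R = ‖phi R‖ := fun _ => rfl
  have hU1 : IsUnit ((1 : Matrix (Fin n) (Fin n) ℝ) + Q) := unitOnePlus Q hQ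
  constructor
  · refine ⟨hU1, ?_, ?_⟩
    · obtain ⟨u, hu⟩ := hU1
      refine ⟨(↑u⁻¹ : Matrix (Fin n) (Fin n) ℝ) * (1 - Q), ?_, ?_⟩
      · show (1 + Q) * ((↑u⁻¹ : Matrix (Fin n) (Fin n) ℝ) * (1 - Q)) = 1 - Q
        rw [← hu, ← mul_assoc, Units.mul_inv, one_mul]
      · intro y hy
        rw [← hu] at hy
        calc y = (↑u⁻¹ : Matrix (Fin n) (Fin n) ℝ) * (↑u * y) := by rw [← mul_assoc, Units.inv_mul, one_mul]
          _ = (↑u⁻¹ : Matrix (Fin n) (Fin n) ℝ) * (1 - Q) := by rw [hy]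
    · intro R hR
      rw [hspec]
      exact norm_lt_one Q R (coercive hQ) hR
  · intro R hr
    rw [hspec] at hr
    have hU2 : IsUnit ((1 : Matrix (Fin n) (Fin n) ℝ) + R) :=
      isUnit_one_add_of_norm_lt_one R hr
    refine ⟨hU2, ?_, ?_⟩
    · obtain ⟨u, hu⟩ := hU2
      set Q0 : Matrix (Fin n) (Fin n) ℝ := (1 - R) * (↑u⁻¹ : Matrix (Fin n) (Fin n) ℝ) with hQ0
      have hE0 : Q0 * (1 + R) = 1 - R := by
        rw [hQ0, mul_assoc, ← hu, Units.inv_mul, mul_one]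
      have hsat : (1 + Q0) * R = 1 - Q0 := by
        have h' : Q0 * R = 1 - R - Q0 := by
          rw [mul_add, mul_one] at hE0
          exact eq_sub_of_add_eq' hE0
        rw [add_mul, one_mul, h']
        abel
      refine ⟨Q0, hsat, ?_⟩
      intro y hy
      have hyE : y * (1 + R) = 1 - R := cayley_reverse_eq R y hy
      have : y * (1 + R) = Q0 * (1 + R) := by rw [hyE, hE0]
      exact (IsUnit.mul_right_cancel ⟨u, hu⟩ this)
    · intro Q' hQ'
      rw [hspec]
      exact posSemidef_of_eq R Q' hr hQ'
end

section
/- Let A : [0,∞) → ℝ^{2N×2N} be measurable, essentially bounded, and satisfy A(t) + A(t)ᵀ ≥ α·Id for some α > 0 and a.e. t ≥ 0. Then there exists γ ∈ (0,1) such that for a.e. t ≥ 0 the spectral norm of K^{1/2} (Id + A(t)K)^{-1} (Id − A(t)K) P₂ K^{−1/2} is at most γ; equivalently, the operator norm of (Id + A(t)K)^{-1}(Id − A(t)K) P₂ with respect to the norm ‖x‖_K = ‖K^{1/2} x‖ is at most γ < 1 uniformly in t. -/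
set_option linter.unusedSectionVars false
set_option linter.unusedVariables false
set_option maxHeartbeats 1000000

open MeasureTheory Matrix Filter Set
open scoped ENNReal

section Aux
variable {ι : Type*} [Fintype ι] [DecidableEq ι]

private lemma qnonneg (v : ι → ℝ) : 0 ≤ v ⬝ᵥ v :=
  Finset.sum_nonneg fun i _ => mul_self_nonneg _

private lemma cross_eq (M : Matrix ι ι ℝ) (v : ι → ℝ) :
    v ⬝ᵥ ((M + Mᵀ) *ᵥ v) = 2 * (v ⬝ᵥ (M *ᵥ v)) := by
  rw [add_mulVec, dotProduct_add, dotProduct_mulVec v Mᵀ v, vecMul_transpose,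
    dotProduct_comm (M *ᵥ v) v]
  ring

private lemma q_add (M : Matrix ι ι ℝ) (v : ι → ℝ) :
    ((1 + M) *ᵥ v) ⬝ᵥ ((1 + M) *ᵥ v)
      = v ⬝ᵥ v + v ⬝ᵥ ((M + Mᵀ) *ᵥ v) + (M *ᵥ v) ⬝ᵥ (M *ᵥ v) := by
  rw [cross_eq, add_mulVec, one_mulVec, dotProduct_add, add_dotProduct, add_dotProduct,
    dotProduct_comm (M *ᵥ v) v]
  ring

private lemma q_sub (M : Matrix ι ι ℝ) (v : ι → ℝ) :
    ((1 - M) *ᵥ v) ⬝ᵥ ((1 - M) *ᵥ v)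
      = v ⬝ᵥ v - v ⬝ᵥ ((M + Mᵀ) *ᵥ v) + (M *ᵥ v) ⬝ᵥ (M *ᵥ v) := by
  rw [cross_eq, sub_mulVec, one_mulVec, dotProduct_sub, sub_dotProduct, sub_dotProduct,
    dotProduct_comm (M *ᵥ v) v]
  ring

private lemma norm_euclidean (u : ι → ℝ) :
    ‖(WithLp.equiv 2 (ι → ℝ)).symm u‖ = Real.sqrt (u ⬝ᵥ u) := by
  rw [EuclideanSpace.norm_eq]
  congr 1
  simp [dotProduct, Real.norm_eq_abs, sq_abs, pow_two]

lemma cayley_core (M P : Matrix ι ι ℝ) (β C : ℝ) (hβ : 0 < β) (hC : 0 ≤ C)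
    (hlow : ∀ v : ι → ℝ, β * (v ⬝ᵥ v) ≤ v ⬝ᵥ ((M + Mᵀ) *ᵥ v))
    (hup : ∀ v : ι → ℝ, (M *ᵥ v) ⬝ᵥ (M *ᵥ v) ≤ C * (v ⬝ᵥ v))
    (hP : Pᵀ * P = 1) :
    specNorm ((1 + M)⁻¹ * (1 - M) * P) ≤ Real.sqrt (max (1 - 2*β/(2+2*C)) (1/2)) := by
  set G := max (1 - 2*β/(2+2*C)) (1/2) with hGdef
  have hG0 : (0:ℝ) ≤ G := le_trans (by norm_num) (le_max_right _ _)
  have hden : (0:ℝ) < 2 + 2*C := by linarith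
  have hGmul : (2 + 2*C) - 2*β ≤ (2 + 2*C) * G := by
    have h1 : (1 - 2*β/(2+2*C)) * (2+2*C) = (2+2*C) - 2*β := by
      field_simp
    have h2 : (1 - 2*β/(2+2*C)) ≤ G := le_max_left _ _
    nlinarith
  have hdet : (1 + M).det ≠ 0 := by
    intro h
    obtain ⟨v, hv0, hv⟩ := (Matrix.exists_mulVec_eq_zero_iff).2 h
    have hq : 0 < v ⬝ᵥ v :=
      lt_of_le_of_ne (qnonneg v) (Ne.symm fun h' => hv0 (dotProduct_self_eq_zero.1 h'))
    have h1 := q_add M v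
    rw [hv] at h1
    simp only [dotProduct_zero, zero_dotProduct] at h1
    nlinarith [hlow v, qnonneg (M *ᵥ v)]
  have hu : IsUnit (1 + M).det := isUnit_iff_ne_zero.2 hdet
  have hmul : (1 + M) * (1 + M)⁻¹ = 1 := Matrix.mul_nonsing_inv _ hu
  have hmul' : (1 + M)⁻¹ * (1 + M) = 1 := Matrix.nonsing_inv_mul _ hu
  have hcomm : (1 + M)⁻¹ * (1 - M) = (1 - M) * (1 + M)⁻¹ := by
    have h2 : (1 + M) * (1 - M) = (1 - M) * (1 + M) := by noncomm_ring
    calc (1 + M)⁻¹ * (1 - M)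
        = (1 + M)⁻¹ * (1 - M) * ((1 + M) * (1 + M)⁻¹) := by rw [hmul, mul_one]
      _ = (1 + M)⁻¹ * ((1 - M) * (1 + M)) * (1 + M)⁻¹ := by
          simp only [Matrix.mul_assoc]
      _ = (1 + M)⁻¹ * ((1 + M) * (1 - M)) * (1 + M)⁻¹ := by rw [h2]
      _ = ((1 + M)⁻¹ * (1 + M)) * ((1 - M) * (1 + M)⁻¹) := by
          simp only [Matrix.mul_assoc]
      _ = (1 - M) * (1 + M)⁻¹ := by rw [hmul', one_mul]
  have key : ∀ v : ι → ℝ,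
      (((1 + M)⁻¹ * (1 - M) * P) *ᵥ v) ⬝ᵥ (((1 + M)⁻¹ * (1 - M) * P) *ᵥ v) ≤ G * (v ⬝ᵥ v) := by
    intro v
    set w := P *ᵥ v with hw
    set z := (1 + M)⁻¹ *ᵥ w with hzdef
    have hqw : w ⬝ᵥ w = v ⬝ᵥ v := by
      calc w ⬝ᵥ w = w ⬝ᵥ (P *ᵥ v) := by rw [hw]
        _ = (w ᵥ* P) ⬝ᵥ v := (dotProduct_mulVec w P v)
        _ = (Pᵀ *ᵥ (P *ᵥ v)) ⬝ᵥ v := by rw [mulVec_transpose]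
        _ = ((Pᵀ * P) *ᵥ v) ⬝ᵥ v := by rw [mulVec_mulVec]
        _ = v ⬝ᵥ v := by rw [hP, one_mulVec]
    have hz : (1 + M) *ᵥ z = w := by
      rw [hzdef, mulVec_mulVec, hmul, one_mulVec]
    have hTv : ((1 + M)⁻¹ * (1 - M) * P) *ᵥ v = (1 - M) *ᵥ z := by
      rw [hcomm, Matrix.mul_assoc, ← mulVec_mulVec, ← mulVec_mulVec]
    have hqp := q_add M z
    have hqm := q_sub M z
    rw [hz] at hqp
    have hlz := hlow z
    have huz := hup z
    have h0m := qnonneg ((1 - M) *ᵥ z)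
    have h0z := qnonneg z
    have h0w := qnonneg w
    rw [hTv, ← hqw]
    have hwz : w ⬝ᵥ w ≤ (2 + 2*C) * (z ⬝ᵥ z) := by nlinarith
    nlinarith [mul_le_mul_of_nonneg_left hwz (le_of_lt hβ)]
  rw [specNorm]
  apply ContinuousLinearMap.opNorm_le_bound _ (Real.sqrt_nonneg _)
  intro x
  set v : ι → ℝ := WithLp.equiv 2 (ι → ℝ) x with hv
  have hx : x = (WithLp.equiv 2 (ι → ℝ)).symm v := (Equiv.symm_apply_apply _ x).symm
  rw [hx]
  change ‖(WithLp.equiv 2 (ι → ℝ)).symm (((1 + M)⁻¹ * (1 - M) * P) *ᵥ v)‖ ≤ _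
  rw [norm_euclidean,
    norm_euclidean]
  rw [← Real.sqrt_mul hG0]
  exact Real.sqrt_le_sqrt (key v)

lemma conj_eq (s : ι → ℝ) (hs : ∀ i, 0 < s i) (A P : Matrix ι ι ℝ)
    (hSP : Matrix.diagonal s * P = P * Matrix.diagonal s) :
    Matrix.diagonal s * ((1 + A * (Matrix.diagonal s * Matrix.diagonal s))⁻¹ *
       (1 - A * (Matrix.diagonal s * Matrix.diagonal s)) * P) * (Matrix.diagonal s)⁻¹
      = (1 + Matrix.diagonal s * A * Matrix.diagonal s)⁻¹ *
        (1 - Matrix.diagonal s * A * Matrix.diagonal s) * P := by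
  set S := Matrix.diagonal s with hS
  have hu : IsUnit S.det := by
    rw [hS, Matrix.det_diagonal]
    exact isUnit_iff_ne_zero.2 (ne_of_gt (Finset.prod_pos fun i _ => hs i))
  have hS1 : S * S⁻¹ = 1 := Matrix.mul_nonsing_inv _ hu
  have hS2 : S⁻¹ * S = 1 := Matrix.nonsing_inv_mul _ hu
  have hSS : (S⁻¹)⁻¹ = S := Matrix.nonsing_inv_nonsing_inv _ hu
  set M := S * A * S with hM
  have h1 : S⁻¹ * ((1 + M) * S) = 1 + A * (S * S) := by
    rw [hM, add_mul, one_mul, mul_add, hS2]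
    congr 1
    calc S⁻¹ * (S * A * S * S) = (S⁻¹ * S) * (A * (S * S)) := by
          simp only [Matrix.mul_assoc]
      _ = A * (S * S) := by rw [hS2, one_mul]
  have hinv : (1 + A * (S * S))⁻¹ = S⁻¹ * (1 + M)⁻¹ * S := by
    rw [← h1, Matrix.mul_inv_rev, Matrix.mul_inv_rev, hSS]
  have h2 : S * (1 - A * (S * S)) = (1 - M) * S := by
    rw [hM, mul_sub, sub_mul, mul_one, one_mul]
    congr 1
    simp only [Matrix.mul_assoc]
  calc S * ((1 + A * (S * S))⁻¹ * (1 - A * (S * S)) * P) * S⁻¹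
      = (S * (S⁻¹ * (1 + M)⁻¹ * S)) * ((1 - A * (S * S)) * (P * S⁻¹)) := by
        rw [hinv]; simp only [Matrix.mul_assoc]
    _ = (1 + M)⁻¹ * ((S * (1 - A * (S * S))) * (P * S⁻¹)) := by
        rw [show S * (S⁻¹ * (1 + M)⁻¹ * S) = (S * S⁻¹) * ((1 + M)⁻¹ * S) from by
          simp only [Matrix.mul_assoc], hS1, one_mul]
        simp only [Matrix.mul_assoc]
    _ = (1 + M)⁻¹ * ((1 - M) * (S * (P * S⁻¹))) := by
        rw [h2]; simp only [Matrix.mul_assoc]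
    _ = (1 + M)⁻¹ * (1 - M) * P := by
        rw [← Matrix.mul_assoc S P, hSP, Matrix.mul_assoc P, hS1, mul_one, Matrix.mul_assoc]

lemma q_bound (M : Matrix ι ι ℝ) (E : ℝ) (hE : 0 ≤ E) (h : ∀ i j, |M i j| ≤ E) (v : ι → ℝ) :
    (M *ᵥ v) ⬝ᵥ (M *ᵥ v) ≤ (Fintype.card ι)^3 * E^2 * (v ⬝ᵥ v) := by
  set n := Fintype.card ι with hn
  have hv : ∀ l, |v l| ≤ Real.sqrt (v ⬝ᵥ v) := by
    intro l
    rw [← Real.sqrt_mul_self_eq_abs]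
    exact Real.sqrt_le_sqrt (Finset.single_le_sum (fun i _ => mul_self_nonneg (v i))
      (Finset.mem_univ l))
  have hMv : ∀ j, |(M *ᵥ v) j| ≤ n * E * Real.sqrt (v ⬝ᵥ v) := by
    intro j
    calc |(M *ᵥ v) j| ≤ ∑ l, |M j l * v l| := Finset.abs_sum_le_sum_abs _ _
      _ ≤ ∑ _l : ι, E * Real.sqrt (v ⬝ᵥ v) := Finset.sum_le_sum fun l _ => by
          rw [abs_mul]
          exact mul_le_mul (h j l) (hv l) (abs_nonneg _) hE
      _ = n * E * Real.sqrt (v ⬝ᵥ v) := by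
          rw [Finset.sum_const, Finset.card_univ, nsmul_eq_mul, hn, mul_assoc]
  have hsq : ∀ j, (M *ᵥ v) j * (M *ᵥ v) j ≤ (n * E * Real.sqrt (v ⬝ᵥ v))^2 := by
    intro j
    rw [← abs_mul_abs_self ((M *ᵥ v) j), sq]
    have h0 : (0:ℝ) ≤ n * E * Real.sqrt (v ⬝ᵥ v) := by positivity
    exact mul_le_mul (hMv j) (hMv j) (abs_nonneg _) h0
  calc (M *ᵥ v) ⬝ᵥ (M *ᵥ v) = ∑ j, (M *ᵥ v) j * (M *ᵥ v) j := rfl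
    _ ≤ ∑ _j : ι, (n * E * Real.sqrt (v ⬝ᵥ v))^2 := Finset.sum_le_sum fun j _ => hsq j
    _ = n * (n * E * Real.sqrt (v ⬝ᵥ v))^2 := by
        rw [Finset.sum_const, Finset.card_univ, nsmul_eq_mul, hn]
    _ ≤ (n:ℝ)^3 * E^2 * (v ⬝ᵥ v) := by
        rw [mul_pow, mul_pow, Real.sq_sqrt (qnonneg v)]
        ring_nf
        exact le_refl _

end Aux

/-- If `A` is measurable, essentially bounded and uniformly dissipative
(`A(t) + A(t)ᵀ ≥ α·Id`, `α > 0`, a.e. `t ≥ 0`), then there is `γ ∈ (0,1)` such that for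
a.e. `t ≥ 0` the spectral norm of
`K^{1/2} (Id + A(t)K)⁻¹ (Id − A(t)K) P₂ K^{-1/2}` is at most `γ`, where
`K = diag(K₁,…,K_N,K₁,…,K_N)` and `P₂ = ((0,Id),(Id,0))`. -/
theorem dissipative_uniform_contraction
    (N : ℕ) (hN : 1 ≤ N)
    (K : Fin N → ℝ) (hK : ∀ k, 0 < K k)
    (A : ℝ → Matrix (Fin N ⊕ Fin N) (Fin N ⊕ Fin N) ℝ)
    (hAmeas : ∀ j l, Measurable fun t => A t j l)
    (hAbdd : ∃ B : ℝ, ∀ᵐ t ∂(volume.restrict (Set.Ici (0 : ℝ))), ∀ j l, |A t j l| ≤ B)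
    (α : ℝ) (hα : 0 < α)
    (hdiss : ∀ᵐ t ∂(volume.restrict (Set.Ici (0 : ℝ))),
      (A t + (A t)ᵀ - α • (1 : Matrix (Fin N ⊕ Fin N) (Fin N ⊕ Fin N) ℝ)).PosSemidef) :
    ∃ γ : ℝ, 0 < γ ∧ γ < 1 ∧
      ∀ᵐ t ∂(volume.restrict (Set.Ici (0 : ℝ))),
        specNorm
          (Matrix.diagonal (Sum.elim (fun k => Real.sqrt (K k)) fun k => Real.sqrt (K k)) *
            (((1 : Matrix (Fin N ⊕ Fin N) (Fin N ⊕ Fin N) ℝ) +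
                A t * Matrix.diagonal (Sum.elim K K))⁻¹ *
              ((1 : Matrix (Fin N ⊕ Fin N) (Fin N ⊕ Fin N) ℝ) -
                A t * Matrix.diagonal (Sum.elim K K)) *
              Matrix.fromBlocks 0 1 1 0) *
            (Matrix.diagonal (Sum.elim (fun k => Real.sqrt (K k)) fun k => Real.sqrt (K k)))⁻¹)
          ≤ γ := by
  classical
  have hNe : Nonempty (Fin N) := ⟨⟨0, hN⟩⟩
  obtain ⟨B, hB⟩ := hAbdd
  set B' : ℝ := max B 0 with hB'def
  have hB'0 : (0:ℝ) ≤ B' := le_max_right _ _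
  set κmin : ℝ := Finset.univ.inf' Finset.univ_nonempty K with hκmindef
  have hκmin_le : ∀ k, κmin ≤ K k := fun k => Finset.inf'_le _ (Finset.mem_univ k)
  have hκmin_pos : 0 < κmin := by
    obtain ⟨k, -, hk⟩ := Finset.exists_mem_eq_inf' Finset.univ_nonempty K
    rw [hκmindef, hk]; exact hK k
  set κmax : ℝ := Finset.univ.sup' Finset.univ_nonempty K with hκmaxdef
  have hκmax_le : ∀ k, K k ≤ κmax := fun k => Finset.le_sup' _ (Finset.mem_univ k)
  have hκmax0 : (0:ℝ) ≤ κmax :=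
    le_trans (hK (Classical.arbitrary _)).le (hκmax_le _)
  set s : Fin N ⊕ Fin N → ℝ :=
    Sum.elim (fun k => Real.sqrt (K k)) fun k => Real.sqrt (K k) with hsdef
  have hs : ∀ i, 0 < s i := by rintro (k|k) <;> exact Real.sqrt_pos.2 (hK k)
  have hs_le : ∀ i, s i ≤ Real.sqrt κmax := by
    rintro (k|k) <;> exact Real.sqrt_le_sqrt (hκmax_le k)
  have hss : ∀ i, s i * s i = Sum.elim K K i := by
    rintro (k|k) <;> exact Real.mul_self_sqrt (hK k).le
  set E : ℝ := κmax * B' with hEdef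
  have hE0 : 0 ≤ E := mul_nonneg hκmax0 hB'0
  set C : ℝ := (Fintype.card (Fin N ⊕ Fin N) : ℝ)^3 * E^2 with hCdef
  have hC0 : 0 ≤ C := by positivity
  set β : ℝ := α * κmin with hβdef
  have hβ0 : 0 < β := mul_pos hα hκmin_pos
  refine ⟨Real.sqrt (max (1 - 2*β/(2+2*C)) (1/2)), ?_, ?_, ?_⟩
  · exact Real.sqrt_pos.2 (lt_of_lt_of_le one_half_pos (le_max_right _ _))
  · have hlt : max (1 - 2*β/(2+2*C)) (1/2) < 1 := by
      apply max_lt _ (by norm_num)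
      have : 0 < 2*β/(2+2*C) := div_pos (by linarith) (by linarith)
      linarith
    calc Real.sqrt (max (1 - 2*β/(2+2*C)) (1/2)) < Real.sqrt 1 :=
          Real.sqrt_lt_sqrt (le_trans (by norm_num) (le_max_right _ _)) hlt
      _ = 1 := Real.sqrt_one
  · have hD : Matrix.diagonal (Sum.elim K K) = Matrix.diagonal s * Matrix.diagonal s := by
      rw [Matrix.diagonal_mul_diagonal,
        show (fun i => s i * s i) = Sum.elim K K from funext fun i => hss i]
    have hSP : Matrix.diagonal s * Matrix.fromBlocks 0 1 1 0
        = Matrix.fromBlocks 0 1 1 0 * Matrix.diagonal s := by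
      have : Matrix.diagonal (Sum.elim (fun k => Real.sqrt (K k)) fun k => Real.sqrt (K k)) *
          Matrix.fromBlocks (0 : Matrix (Fin N) (Fin N) ℝ) 1 1 0
          = Matrix.fromBlocks (0 : Matrix (Fin N) (Fin N) ℝ) 1 1 0 *
          Matrix.diagonal (Sum.elim (fun k => Real.sqrt (K k)) fun k => Real.sqrt (K k)) := by
        simp only [← Matrix.fromBlocks_diagonal, Matrix.fromBlocks_multiply]
        simp
      exact this
    have hP : (Matrix.fromBlocks (0 : Matrix (Fin N) (Fin N) ℝ) 1 1 0)ᵀ *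
        Matrix.fromBlocks (0 : Matrix (Fin N) (Fin N) ℝ) 1 1 0
        = (1 : Matrix (Fin N ⊕ Fin N) (Fin N ⊕ Fin N) ℝ) := by
      simp [Matrix.fromBlocks_transpose, Matrix.fromBlocks_multiply, Matrix.fromBlocks_one]
    filter_upwards [hdiss, hB] with t ht hbt
    rw [hD, conj_eq s hs (A t) _ hSP]
    set S := Matrix.diagonal s with hSdef
    set M := S * A t * S with hMdef
    -- entry bound for M
    have hMentry : ∀ i j, |M i j| ≤ E := by
      intro i j
      have hij : M i j = s i * A t i j * s j := by
        rw [hMdef, hSdef]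
        rw [Matrix.mul_diagonal, Matrix.diagonal_mul]
      calc |M i j| = s i * |A t i j| * s j := by
            rw [hij, abs_mul, abs_mul, abs_of_pos (hs i), abs_of_pos (hs j)]
        _ ≤ Real.sqrt κmax * B' * Real.sqrt κmax := by
            have h1 : |A t i j| ≤ B' := le_trans (hbt i j) (le_max_left _ _)
            have h2 := Real.sqrt_nonneg κmax
            apply mul_le_mul (mul_le_mul (hs_le i) h1 (abs_nonneg _) h2) (hs_le j) (hs j).le
            positivity
        _ = E := by
            rw [hEdef]
            conv_rhs => rw [← Real.mul_self_sqrt hκmax0]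
            ring
    -- lower bound
    have hlow : ∀ v : Fin N ⊕ Fin N → ℝ, β * (v ⬝ᵥ v) ≤ v ⬝ᵥ ((M + Mᵀ) *ᵥ v) := by
      intro v
      have hMT : M + Mᵀ = S * ((A t + (A t)ᵀ) * S) := by
        have hST : Sᵀ = S := by rw [hSdef, Matrix.diagonal_transpose]
        rw [hMdef]
        simp only [Matrix.transpose_mul, hST, Matrix.mul_add, Matrix.add_mul, Matrix.mul_assoc]
      set w := S *ᵥ v with hwdef
      have hre : (S * ((A t + (A t)ᵀ) * S)) *ᵥ v = S *ᵥ ((A t + (A t)ᵀ) *ᵥ w) := by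
        rw [hwdef, ← mulVec_mulVec, ← mulVec_mulVec]
      have hvS : v ᵥ* S = w := by
        funext i
        rw [hwdef, hSdef, Matrix.vecMul_diagonal, Matrix.mulVec_diagonal, mul_comm]
      have hdot : v ⬝ᵥ (S *ᵥ ((A t + (A t)ᵀ) *ᵥ w)) = w ⬝ᵥ ((A t + (A t)ᵀ) *ᵥ w) := by
        rw [dotProduct_mulVec, hvS]
      have hpos := ht.dotProduct_mulVec_nonneg w
      have hq : α * (w ⬝ᵥ w) ≤ w ⬝ᵥ ((A t + (A t)ᵀ) *ᵥ w) := by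
        have hst : star w = w := by funext i; simp
        rw [hst, sub_mulVec, dotProduct_sub, Matrix.smul_mulVec, one_mulVec,
          dotProduct_smul, smul_eq_mul] at hpos
        linarith
      have hwv : κmin * (v ⬝ᵥ v) ≤ w ⬝ᵥ w := by
        have h1 : ∀ i, κmin * (v i * v i) ≤ w i * w i := by
          intro i
          have hwi : w i = s i * v i := by rw [hwdef, hSdef, Matrix.mulVec_diagonal]
          have h2 : κmin ≤ s i * s i := by
            rw [hss i]
            rcases i with k|k
            · exact hκmin_le k
            · exact hκmin_le k
          rw [hwi]
          nlinarith [mul_self_nonneg (v i)]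
        calc κmin * (v ⬝ᵥ v) = ∑ i, κmin * (v i * v i) := by
              rw [show v ⬝ᵥ v = ∑ i, v i * v i from rfl, Finset.mul_sum]
          _ ≤ ∑ i, w i * w i := Finset.sum_le_sum fun i _ => h1 i
          _ = w ⬝ᵥ w := rfl
      calc β * (v ⬝ᵥ v) = α * (κmin * (v ⬝ᵥ v)) := by rw [hβdef]; ring
        _ ≤ α * (w ⬝ᵥ w) := mul_le_mul_of_nonneg_left hwv hα.le
        _ ≤ w ⬝ᵥ ((A t + (A t)ᵀ) *ᵥ w) := hq
        _ = v ⬝ᵥ ((M + Mᵀ) *ᵥ v) := by rw [hMT, hre, hdot]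
    have hup : ∀ v : Fin N ⊕ Fin N → ℝ, (M *ᵥ v) ⬝ᵥ (M *ᵥ v) ≤ C * (v ⬝ᵥ v) := by
      intro v
      rw [hCdef]
      exact q_bound M E hE0 hMentry v
    exact cayley_core M _ β C hβ0 hC0 hlow hup hP
end
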